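/- arXiv:2508.21534 — 6 statements merged into one kernel-verified Lean document; each statement's English description precedes it below -/
import Mathlib

section
/- Let p, n ≥ 1, let S = (S_0, …, S_{2n}) be a truncated matrix moment sequence whose moment matrix M(n) is positive definite, let t ∈ ℝ and m ∈ ℕ ∪ {0}. If there exists a minimal representing measure for S (pairwise distinct x_1,…,x_ℓ ∈ ℝ and nonzero PSD symmetric p×p matrices A_1,…,A_ℓ with S_i = Σ_j x_j^i A_j for 0 ≤ i ≤ 2n and Σ_j rank A_j = (n+1)p) whose multiplicity at t equals m, then m ≤ rank H_{x−t}(n−1) − (n−1)p, where H_{x−t}(n−1) is the (x−t)-localizing moment matrix of S. -/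
open Matrix

/-- The `n`-th truncated moment matrix of a sequence of `p × p` real matrices:
the `(i,j)`-th `p × p` block is `S (i + j)` for `0 ≤ i, j ≤ n`. -/
def momentMatrix (p n : ℕ) (S : ℕ → Matrix (Fin p) (Fin p) ℝ) :
    Matrix (Fin (n + 1) × Fin p) (Fin (n + 1) × Fin p) ℝ :=
  fun i j => S (i.1.1 + j.1.1) i.2 j.2

/-- The `(x - t)`-localizing moment matrix `H_{x-t}(n-1)` of size `np`:
the `(i,j)`-th `p × p` block is `S (i + j + 1) - t • S (i + j)` for `0 ≤ i, j ≤ n - 1`. -/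
def locMatrix (p n : ℕ) (t : ℝ) (S : ℕ → Matrix (Fin p) (Fin p) ℝ) :
    Matrix (Fin n × Fin p) (Fin n × Fin p) ℝ :=
  fun i j => S (i.1.1 + j.1.1 + 1) i.2 j.2 - t * S (i.1.1 + j.1.1) i.2 j.2

/-- A minimal representing measure for the truncated matrix moment sequence
`S_0, …, S_{2n}`: pairwise distinct atoms `x j`, nonzero PSD masses `A j` with
`S i = ∑ j (x j)^i • A j` for `i ≤ 2n` and total rank `(n+1)p`. -/
def IsMinimalRepMeasure (p n ℓ : ℕ) (S : ℕ → Matrix (Fin p) (Fin p) ℝ)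
    (x : Fin ℓ → ℝ) (A : Fin ℓ → Matrix (Fin p) (Fin p) ℝ) : Prop :=
  Function.Injective x ∧
    (∀ j, A j ≠ 0 ∧ (A j).PosSemidef) ∧
    (∀ i ≤ 2 * n, S i = ∑ j, x j ^ i • A j) ∧
    (∑ j, (A j).rank) = (n + 1) * p

/-- The multiplicity of `t` in the measure given by atoms `x` and masses `A` equals `m`. -/
def MultiplicityEq {p : ℕ} (ℓ : ℕ) (x : Fin ℓ → ℝ)
    (A : Fin ℓ → Matrix (Fin p) (Fin p) ℝ) (t : ℝ) (m : ℕ) : Prop :=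
  (∃ j, x j = t ∧ (A j).rank = m) ∨ ((∀ j, x j ≠ t) ∧ m = 0)

namespace GQAux

/-- Evaluation of the vector polynomial with coefficient blocks `v` at `s`. -/
noncomputable def evalP {p N : ℕ} (v : Fin N × Fin p → ℝ) (s : ℝ) : Fin p → ℝ :=
  fun r => ∑ a : Fin N, s ^ (a : ℕ) * v (a, r)

/-- Coefficients of `(X - t) * v`. -/
noncomputable def shift {p n : ℕ} (t : ℝ) (v : Fin n × Fin p → ℝ) :
    Fin (n + 1) × Fin p → ℝ :=
  fun br => (∑ a : Fin n, if (a : ℕ) + 1 = (br.1 : ℕ) then v (a, br.2) else 0)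
    - t * ∑ a : Fin n, if (a : ℕ) = (br.1 : ℕ) then v (a, br.2) else 0

lemma sum_fin_ite {N : ℕ} (k : ℕ) (hk : k < N) (f : Fin N → ℝ) :
    (∑ b : Fin N, if k = (b : ℕ) then f b else 0) = f ⟨k, hk⟩ := by
  rw [Finset.sum_eq_single (⟨k, hk⟩ : Fin N)]
  · simp
  · intro b _ hb
    rw [if_neg]
    intro h; exact hb (by ext; simp only [Fin.val_mk]; omega)
  · simp

lemma evalP_shift {p n : ℕ} (t : ℝ) (v : Fin n × Fin p → ℝ) (s : ℝ) :
    evalP (shift t v) s = fun r => (s - t) * evalP v s r := by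
  funext r
  simp only [evalP, shift, mul_sub, Finset.mul_sum, sub_mul, Finset.sum_sub_distrib]
  congr 1
  · rw [Finset.sum_comm]
    refine Finset.sum_congr rfl fun a _ => ?_
    have : (∑ b : Fin (n+1), s ^ (b:ℕ) * (if (a:ℕ) + 1 = (b:ℕ) then v (a, r) else 0))
        = ∑ b : Fin (n+1), (if (a:ℕ)+1 = (b:ℕ) then s ^ (b:ℕ) * v (a, r) else 0) := by
      refine Finset.sum_congr rfl fun b _ => ?_; split <;> simp
    rw [this, sum_fin_ite ((a:ℕ)+1) (by omega)]
    ring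
  · rw [Finset.sum_comm]
    refine Finset.sum_congr rfl fun a _ => ?_
    have : (∑ b : Fin (n+1), s ^ (b:ℕ) * (t * (if (a:ℕ) = (b:ℕ) then v (a, r) else 0)))
        = ∑ b : Fin (n+1), (if (a:ℕ) = (b:ℕ) then s ^ (b:ℕ) * (t * v (a, r)) else 0) := by
      refine Finset.sum_congr rfl fun b _ => ?_; split <;> simp
    rw [this, sum_fin_ite (a:ℕ) (by omega)]
    ring

lemma shift_eq_zero {p n : ℕ} (t : ℝ) (v : Fin n × Fin p → ℝ)
    (h : shift t v = 0) : v = 0 := by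
  have hrec : ∀ (a : Fin n) (r : Fin p),
      v (a, r) = t * (∑ a' : Fin n, if (a':ℕ) = (a:ℕ) + 1 then v (a', r) else 0) := by
    intro a r
    have hb := congrFun h (⟨(a:ℕ)+1, by omega⟩, r)
    simp only [shift, Pi.zero_apply, sub_eq_zero] at hb
    have h1 : (∑ a' : Fin n, if (a':ℕ) + 1 = (a:ℕ) + 1 then v (a', r) else 0) = v (a, r) := by
      rw [Finset.sum_eq_single a]
      · simp
      · intro b _ hb'; rw [if_neg]; intro hh; exact hb' (by ext; omega)
      · simp
    rw [h1] at hb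
    exact hb
  have hzero : ∀ (k : ℕ) (a : Fin n) (r : Fin p), n ≤ (a:ℕ) + k + 1 → v (a, r) = 0 := by
    intro k
    induction k with
    | zero =>
      intro a r ha
      rw [hrec a r, Finset.sum_eq_zero, mul_zero]
      intro a' _
      rw [if_neg]; omega
    | succ k ih =>
      intro a r ha
      rw [hrec a r]
      by_cases hlt : (a:ℕ) + 1 < n
      · have : (∑ a' : Fin n, if (a':ℕ) = (a:ℕ) + 1 then v (a', r) else 0)
            = v (⟨(a:ℕ)+1, hlt⟩, r) := by
          rw [Finset.sum_eq_single (⟨(a:ℕ)+1, hlt⟩ : Fin n)]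
          · simp
          · intro b _ hb'; rw [if_neg]; intro hh; exact hb' (by ext; simp only [Fin.val_mk]; omega)
          · simp
        rw [this, ih ⟨(a:ℕ)+1, hlt⟩ r (by simp only [Fin.val_mk]; omega), mul_zero]
      · rw [Finset.sum_eq_zero, mul_zero]
        intro a' _; rw [if_neg]; omega
  funext ar
  obtain ⟨a, r⟩ := ar
  exact hzero n a r (by omega)

lemma dot_struct {p N : ℕ} (w : Fin N × Fin p → ℝ) (s : ℝ) (g : Fin p → ℝ) :
    (w ⬝ᵥ fun u => s ^ (u.1 : ℕ) * g u.2) = evalP w s ⬝ᵥ g := by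
  simp only [dotProduct, evalP, Fintype.sum_prod_type, Finset.sum_mul]
  rw [Finset.sum_comm]
  refine Finset.sum_congr rfl fun a _ => Finset.sum_congr rfl fun r _ => by ring

lemma mulVec_struct {p N : ℕ} (B : Matrix (Fin p) (Fin p) ℝ) (s : ℝ)
    (w : Fin N × Fin p → ℝ) :
    ((fun (u v : Fin N × Fin p) => s ^ ((u.1 : ℕ) + (v.1 : ℕ)) * B u.2 v.2) *ᵥ w)
      = fun u => s ^ (u.1 : ℕ) * (B *ᵥ evalP w s) u.2 := by
  funext u
  simp only [mulVec, dotProduct, evalP, Fintype.sum_prod_type, pow_add, Finset.mul_sum]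
  rw [Finset.sum_comm]
  refine Finset.sum_congr rfl fun r _ => Finset.sum_congr rfl fun c _ => by ring

variable {p n ℓ : ℕ} {S : ℕ → Matrix (Fin p) (Fin p) ℝ}
  {x : Fin ℓ → ℝ} {A : Fin ℓ → Matrix (Fin p) (Fin p) ℝ} {t : ℝ}

lemma dotProduct_sum' {I K : Type*} [Fintype I] [Fintype K] (w : K → ℝ) (f : I → K → ℝ) :
    w ⬝ᵥ (∑ i, f i) = ∑ i, w ⬝ᵥ f i := by
  simp only [dotProduct, Finset.sum_apply, Finset.mul_sum]
  rw [Finset.sum_comm]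

lemma momentMatrix_eq_sum (hS : ∀ i ≤ 2 * n, S i = ∑ j, x j ^ i • A j) :
    momentMatrix p n S
      = ∑ j, (fun (u v : Fin (n+1) × Fin p) =>
          x j ^ ((u.1 : ℕ) + (v.1 : ℕ)) * A j u.2 v.2) := by
  funext u v
  have hle : (u.1 : ℕ) + (v.1 : ℕ) ≤ 2 * n := by
    have := u.1.isLt; have := v.1.isLt; omega
  have := hS ((u.1 : ℕ) + (v.1 : ℕ)) hle
  simp only [momentMatrix, this, Finset.sum_apply, Matrix.sum_apply, Matrix.smul_apply,
    smul_eq_mul]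

lemma quadform_expand (hS : ∀ i ≤ 2 * n, S i = ∑ j, x j ^ i • A j)
    (w : Fin (n+1) × Fin p → ℝ) :
    w ⬝ᵥ (momentMatrix p n S) *ᵥ w
      = ∑ j, evalP w (x j) ⬝ᵥ (A j) *ᵥ evalP w (x j) := by
  rw [momentMatrix_eq_sum hS]
  have hs : ((∑ j, (fun (u v : Fin (n+1) × Fin p) =>
        x j ^ ((u.1 : ℕ) + (v.1 : ℕ)) * A j u.2 v.2)) *ᵥ w)
      = ∑ j, ((fun (u v : Fin (n+1) × Fin p) =>
        x j ^ ((u.1 : ℕ) + (v.1 : ℕ)) * A j u.2 v.2) *ᵥ w) := by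
    exact Matrix.sum_mulVec (α := ℝ) (m := Fin (n+1) × Fin p) Finset.univ _ w
  erw [hs, dotProduct_sum']
  refine Finset.sum_congr rfl fun j _ => ?_
  rw [mulVec_struct, dot_struct]

/-- The key injectivity: if `(x j - t) • A j *ᵥ v(x j) = 0` for all `j`, then `v = 0`. -/
lemma key (hM : (momentMatrix p n S).PosDef)
    (hS : ∀ i ≤ 2 * n, S i = ∑ j, x j ^ i • A j)
    (v : Fin n × Fin p → ℝ)
    (hv : ∀ j, (x j - t) • ((A j) *ᵥ evalP v (x j)) = 0) : v = 0 := by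
  refine shift_eq_zero t v ?_
  by_contra hw
  have hq := quadform_expand hS (shift t v)
  have hzero : ∀ j ∈ Finset.univ,
      evalP (shift t v) (x j) ⬝ᵥ (A j) *ᵥ evalP (shift t v) (x j) = 0 := by
    intro j _
    rw [evalP_shift]
    have h1 : (fun r => (x j - t) * evalP v (x j) r) = (x j - t) • evalP v (x j) := by
      funext r; simp [smul_eq_mul]
    rw [h1, mulVec_smul, hv j, dotProduct_zero]
  rw [Finset.sum_eq_zero hzero] at hq
  have := hM.dotProduct_mulVec_pos hw
  rw [star_trivial] at this
  rw [hq] at this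
  exact lt_irrefl 0 this

noncomputable def Gmat (p n ℓ : ℕ) (x : Fin ℓ → ℝ) :
    Matrix (Fin n × Fin p) (Fin ℓ × Fin p) ℝ :=
  fun ar jc => if ar.2 = jc.2 then x jc.1 ^ (ar.1 : ℕ) else 0

noncomputable def Rmat (p ℓ : ℕ) (t : ℝ) (x : Fin ℓ → ℝ)
    (A : Fin ℓ → Matrix (Fin p) (Fin p) ℝ) :
    Matrix (Fin ℓ × Fin p) (Fin ℓ × Fin p) ℝ :=
  fun jc kd => if x kd.1 = t then 0 else if jc.1 = kd.1 then A jc.1 jc.2 kd.2 else 0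

noncomputable def Dmat (p ℓ : ℕ) (t : ℝ) (x : Fin ℓ → ℝ) :
    Matrix (Fin ℓ × Fin p) (Fin ℓ × Fin p) ℝ :=
  Matrix.diagonal (fun jc => x jc.1 - t)

variable {x : Fin ℓ → ℝ} {A : Fin ℓ → Matrix (Fin p) (Fin p) ℝ} {t : ℝ}

lemma mulVec_Gt (u : Fin n × Fin p → ℝ) :
    (Gmat p n ℓ x)ᵀ *ᵥ u = fun kd => evalP u (x kd.1) kd.2 := by
  funext kd
  simp only [Gmat, mulVec, dotProduct, transpose_apply, Fintype.sum_prod_type, evalP,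
    ite_mul, zero_mul]
  refine Finset.sum_congr rfl fun a _ => ?_
  rw [Finset.sum_ite_eq' Finset.univ kd.2 (fun s => x kd.1 ^ (a:ℕ) * u (a, s))]
  simp

lemma mulVec_R (y : Fin ℓ × Fin p → ℝ) :
    Rmat p ℓ t x A *ᵥ y = fun jc => if x jc.1 = t then 0
      else ((A jc.1) *ᵥ fun d => y (jc.1, d)) jc.2 := by
  funext jc
  obtain ⟨j, c⟩ := jc
  simp only [Rmat, mulVec, dotProduct, Fintype.sum_prod_type]
  rw [Finset.sum_eq_single j]
  · by_cases hxj : x j = t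
    · simp [hxj]
    · simp [hxj]
  · intro k _ hk
    refine Finset.sum_eq_zero fun d _ => ?_
    by_cases hxk : x k = t <;> simp [hxk, Ne.symm hk]
  · simp

lemma mulVec_Rt (hA : ∀ j, (A j).PosSemidef) (y : Fin ℓ × Fin p → ℝ) :
    (Rmat p ℓ t x A)ᵀ *ᵥ y = fun kd => if x kd.1 = t then 0
      else ((A kd.1) *ᵥ fun c => y (kd.1, c)) kd.2 := by
  funext kd
  obtain ⟨k, d⟩ := kd
  have hsym : ∀ j (c e : Fin p), A j c e = A j e c := by
    intro j c e
    conv_lhs => rw [← (hA j).1]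
    simp [conjTranspose_apply]
  simp only [Rmat, mulVec, dotProduct, transpose_apply, Fintype.sum_prod_type]
  rw [Finset.sum_eq_single k]
  · by_cases hxk : x k = t
    · simp [hxk]
    · simp [hxk, mulVec, dotProduct]
      exact Finset.sum_congr rfl fun c _ => by rw [hsym k c d]
  · intro j _ hj
    refine Finset.sum_eq_zero fun c _ => ?_
    by_cases hxk : x k = t <;> simp [hxk, hj]
  · simp

lemma DGt_entry (kd : Fin ℓ × Fin p) (br : Fin n × Fin p) :
    (Dmat p ℓ t x * (Gmat p n ℓ x)ᵀ) kd br
      = (x kd.1 - t) * (if br.2 = kd.2 then x kd.1 ^ (br.1 : ℕ) else 0) := by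
  simp [Dmat, Gmat, diagonal_mul, transpose_apply]

lemma Pm_entry (jc : Fin ℓ × Fin p) (br : Fin n × Fin p) :
    (Rmat p ℓ t x A * (Dmat p ℓ t x * (Gmat p n ℓ x)ᵀ)) jc br
      = (x jc.1 - t) * x jc.1 ^ (br.1 : ℕ) * A jc.1 jc.2 br.2 := by
  obtain ⟨j, c⟩ := jc
  obtain ⟨b, r⟩ := br
  have hstep : (Rmat p ℓ t x A * (Dmat p ℓ t x * (Gmat p n ℓ x)ᵀ)) (j,c) (b,r)
      = ∑ kd : Fin ℓ × Fin p, Rmat p ℓ t x A (j,c) kd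
          * ((x kd.1 - t) * (if r = kd.2 then x kd.1 ^ (b:ℕ) else 0)) := by
    rw [Matrix.mul_apply]
    exact Finset.sum_congr rfl fun kd _ => by rw [DGt_entry]
  rw [hstep]
  simp only [Rmat, Fintype.sum_prod_type]
  rw [Finset.sum_eq_single j]
  · by_cases hxj : x j = t
    · simp [hxj]
    · simp only [hxj, if_false, if_pos rfl, ite_true]
      rw [Finset.sum_eq_single r]
      · simp [mul_comm, mul_left_comm]
      · intro d _ hd
        simp [Ne.symm hd]
      · simp
  · intro k _ hk
    refine Finset.sum_eq_zero fun d _ => ?_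
    by_cases hxk : x k = t <;> simp [hxk, Ne.symm hk]
  · simp

lemma GP_eq_loc {S : ℕ → Matrix (Fin p) (Fin p) ℝ} (hn : 1 ≤ n)
    (hS : ∀ i ≤ 2 * n, S i = ∑ j, x j ^ i • A j) :
    Gmat p n ℓ x * (Rmat p ℓ t x A * (Dmat p ℓ t x * (Gmat p n ℓ x)ᵀ))
      = locMatrix p n t S := by
  funext as br
  obtain ⟨a, s⟩ := as
  obtain ⟨b, r⟩ := br
  have hstep : (Gmat p n ℓ x * (Rmat p ℓ t x A * (Dmat p ℓ t x * (Gmat p n ℓ x)ᵀ))) (a,s) (b,r)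
      = ∑ jc : Fin ℓ × Fin p, Gmat p n ℓ x (a,s) jc
          * ((x jc.1 - t) * x jc.1 ^ (b : ℕ) * A jc.1 jc.2 r) := by
    rw [Matrix.mul_apply]
    exact Finset.sum_congr rfl fun jc _ => by rw [Pm_entry]
  rw [hstep]
  have ha : (a : ℕ) + (b : ℕ) + 1 ≤ 2 * n := by
    have := a.isLt; have := b.isLt; omega
  have hb : (a : ℕ) + (b : ℕ) ≤ 2 * n := by omega
  simp only [locMatrix, hS _ ha, hS _ hb, Matrix.sum_apply, Matrix.smul_apply, smul_eq_mul,
    Finset.mul_sum, Gmat, Fintype.sum_prod_type, ite_mul, zero_mul]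
  rw [← Finset.sum_sub_distrib]
  refine Finset.sum_congr rfl fun j _ => ?_
  rw [Finset.sum_ite_eq Finset.univ s
    (fun c => x j ^ (a : ℕ) * ((x j - t) * x j ^ (b : ℕ) * A j c r))]
  simp only [Finset.mem_univ, if_true]
  ring

lemma rank_add_le' {J K : Type*} [Fintype J] [Fintype K] [DecidableEq K]
    (A B : Matrix J K ℝ) : (A + B).rank ≤ A.rank + B.rank := by
  have hr : LinearMap.range (A + B).mulVecLin
      ≤ LinearMap.range A.mulVecLin ⊔ LinearMap.range B.mulVecLin := by
    rintro _ ⟨v, rfl⟩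
    rw [Matrix.mulVecLin_add]
    exact Submodule.add_mem_sup (LinearMap.mem_range_self _ v) (LinearMap.mem_range_self _ v)
  have h1 : (A + B).rank ≤ Module.finrank ℝ
      (↥(LinearMap.range A.mulVecLin ⊔ LinearMap.range B.mulVecLin)) :=
    Submodule.finrank_mono hr
  have h2 := Submodule.finrank_sup_add_finrank_inf_eq
    (LinearMap.range A.mulVecLin) (LinearMap.range B.mulVecLin)
  unfold Matrix.rank at *
  omega

lemma rank_sum_le {I J K : Type*} [Fintype J] [Fintype K] [DecidableEq K]
    (s : Finset I) (f : I → Matrix J K ℝ) :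
    (∑ i ∈ s, f i).rank ≤ ∑ i ∈ s, (f i).rank := by
  classical
  induction s using Finset.induction_on with
  | empty => simp
  | insert a s' hns ih =>
    rw [Finset.sum_insert hns, Finset.sum_insert hns]
    exact le_trans (rank_add_le' _ _) (by omega)

noncomputable def Fj (p ℓ : ℕ) (j : Fin ℓ) : Matrix (Fin ℓ × Fin p) (Fin p) ℝ :=
  fun u c => if u.1 = j ∧ u.2 = c then 1 else 0

noncomputable def Rj (p ℓ : ℕ) (j : Fin ℓ) (A : Fin ℓ → Matrix (Fin p) (Fin p) ℝ) :
    Matrix (Fin ℓ × Fin p) (Fin ℓ × Fin p) ℝ :=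
  fun u v => if u.1 = j ∧ v.1 = j then A j u.2 v.2 else 0

lemma Rj_eq (j : Fin ℓ) : Rj p ℓ j A = Fj p ℓ j * (A j * (Fj p ℓ j)ᵀ) := by
  funext u v
  simp only [Rj, Fj, Matrix.mul_apply, transpose_apply]
  by_cases hu : u.1 = j <;> by_cases hv : v.1 = j <;>
    simp [hu, hv, ite_and, mul_ite, ite_mul, mul_zero, zero_mul, mul_one,
      Finset.sum_ite_eq, Finset.sum_ite_eq']

lemma rank_Rj_le (j : Fin ℓ) : (Rj p ℓ j A).rank ≤ (A j).rank := by
  rw [Rj_eq]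
  exact le_trans (Matrix.rank_mul_le_right _ _) (Matrix.rank_mul_le_left _ _)

lemma R_eq_sum : Rmat p ℓ t x A
    = ∑ j ∈ Finset.univ.filter (fun j => x j ≠ t), Rj p ℓ j A := by
  funext u v
  classical
  rw [Matrix.sum_apply]
  by_cases hxv : x v.1 = t
  · simp only [Rmat, hxv, if_true]
    refine (Finset.sum_eq_zero fun j hj => ?_).symm
    rw [Rj, if_neg]
    rintro ⟨h1, h2⟩
    exact (Finset.mem_filter.mp hj).2 (h2 ▸ hxv)
  · by_cases huv : u.1 = v.1
    · rw [Finset.sum_eq_single v.1]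
      · simp [Rmat, Rj, hxv, huv]
      · intro j _ hj
        rw [Rj, if_neg]
        rintro ⟨h1, h2⟩
        exact hj h2.symm
      · intro hv
        exact absurd (Finset.mem_filter.mpr ⟨Finset.mem_univ v.1, hxv⟩) hv
    · rw [Finset.sum_eq_zero fun j hj => ?_]
      · simp [Rmat, hxv, huv]
      · rw [Rj, if_neg]
        rintro ⟨h1, h2⟩
        exact huv (h1.trans h2.symm)

lemma rank_R_le {m N : ℕ}
    (hme : (∃ j, x j = t ∧ (A j).rank = m) ∨ ((∀ j, x j ≠ t) ∧ m = 0))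
    (htot : (∑ j, (A j).rank) = N) :
    (Rmat p ℓ t x A).rank + m ≤ N := by
  classical
  have h1 : (Rmat p ℓ t x A).rank
      ≤ ∑ j ∈ Finset.univ.filter (fun j => x j ≠ t), (A j).rank := by
    rw [R_eq_sum]
    exact le_trans (rank_sum_le _ _) (Finset.sum_le_sum fun j _ => rank_Rj_le j)
  rcases hme with ⟨j₀, hx0, hr0⟩ | ⟨hall, hm0⟩
  · have hnotmem : j₀ ∉ Finset.univ.filter (fun j => x j ≠ t) := by
      simp [hx0]
    have h2 : (∑ j ∈ Finset.univ.filter (fun j => x j ≠ t), (A j).rank) + m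
        = ∑ j ∈ insert j₀ (Finset.univ.filter (fun j => x j ≠ t)), (A j).rank := by
      rw [Finset.sum_insert hnotmem, hr0]
      omega
    have h3 : (∑ j ∈ insert j₀ (Finset.univ.filter (fun j => x j ≠ t)), (A j).rank)
        ≤ ∑ j, (A j).rank :=
      Finset.sum_le_sum_of_subset (Finset.subset_univ _)
    omega
  · have h2 : (∑ j ∈ Finset.univ.filter (fun j => x j ≠ t), (A j).rank)
        ≤ ∑ j, (A j).rank := Finset.sum_le_sum_of_subset (Finset.subset_univ _)
    omega

lemma P_inj (hM : (momentMatrix p n S).PosDef)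
    (hS : ∀ i ≤ 2 * n, S i = ∑ j, x j ^ i • A j) :
    Function.Injective (Rmat p ℓ t x A * (Dmat p ℓ t x * (Gmat p n ℓ x)ᵀ)).mulVecLin := by
  refine (injective_iff_map_eq_zero _).mpr fun v hv => ?_
  rw [Matrix.mulVecLin_apply, ← Matrix.mulVec_mulVec, ← Matrix.mulVec_mulVec,
    mulVec_Gt] at hv
  have hD : Dmat p ℓ t x *ᵥ (fun kd => evalP v (x kd.1) kd.2)
      = fun kd => (x kd.1 - t) * evalP v (x kd.1) kd.2 := by
    funext kd
    rw [Dmat, mulVec_diagonal]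
  rw [hD, mulVec_R] at hv
  refine key (t := t) hM hS v fun j => ?_
  by_cases hxj : x j = t
  · rw [hxj, sub_self, zero_smul]
  · have h1 : (fun d => (x j - t) * evalP v (x j) d) = (x j - t) • evalP v (x j) := by
      funext d; simp
    funext c
    have h2 := congrFun hv (j, c)
    simp only [hxj, if_false, Pi.zero_apply] at h2
    have h3 : ((A j) *ᵥ ((x j - t) • evalP v (x j))) c = 0 := by
      rw [← h1]; exact h2
    rw [mulVec_smul] at h3
    exact h3

lemma Qt_inj (hM : (momentMatrix p n S).PosDef)
    (hS : ∀ i ≤ 2 * n, S i = ∑ j, x j ^ i • A j)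
    (hA : ∀ j, (A j).PosSemidef) :
    Function.Injective ((Gmat p n ℓ x * Rmat p ℓ t x A)ᵀ).mulVecLin := by
  refine (injective_iff_map_eq_zero _).mpr fun u hu => ?_
  rw [Matrix.mulVecLin_apply, Matrix.transpose_mul, ← Matrix.mulVec_mulVec,
    mulVec_Gt, mulVec_Rt hA] at hu
  refine key (t := t) hM hS u fun j => ?_
  by_cases hxj : x j = t
  · rw [hxj, sub_self, zero_smul]
  · have h2 : ∀ c, ((A j) *ᵥ (fun d => evalP u (x j) d)) c = 0 := by
      intro c
      have := congrFun hu (j, c)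
      simp only [hxj, if_false, Pi.zero_apply] at this
      exact this
    funext c
    simp only [Pi.smul_apply, Pi.zero_apply, smul_eq_mul]
    have h3 : ((A j) *ᵥ evalP u (x j)) c = 0 := h2 c
    rw [h3, mul_zero]

end GQAux


/-- If there is a minimal representing measure with multiplicity `m` at `t`,
then `m ≤ rank H_{x-t}(n-1) - (n-1)p`. -/
theorem gaussian_quadrature_prescribed_atom_necessity (p n : ℕ) (hp : 1 ≤ p) (hn : 1 ≤ n)
    (S : ℕ → Matrix (Fin p) (Fin p) ℝ)
    (hSsym : ∀ i ≤ 2 * n, (S i).IsSymm)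
    (hM : (momentMatrix p n S).PosDef)
    (t : ℝ) (m : ℕ)
    (hex : ∃ (ℓ : ℕ) (x : Fin ℓ → ℝ) (A : Fin ℓ → Matrix (Fin p) (Fin p) ℝ),
        IsMinimalRepMeasure p n ℓ S x A ∧ MultiplicityEq ℓ x A t m) :
    m + (n - 1) * p ≤ (locMatrix p n t S).rank := by
  classical
  obtain ⟨ℓ, x, A, ⟨hinj, hA, hS, htot⟩, hme⟩ := hex
  have hA' : ∀ j, (A j).PosSemidef := fun j => (hA j).2
  set Gm := GQAux.Gmat p n ℓ x with hGm
  set Rm := GQAux.Rmat p ℓ t x A with hRm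
  set Dm := GQAux.Dmat p ℓ t x with hDm
  set Pm := Rm * (Dm * Gmᵀ) with hPm
  set H := locMatrix p n t S with hH
  have hloc : Gm * Pm = H := GQAux.GP_eq_loc hn hS
  have hPinj : Function.Injective Pm.mulVecLin := GQAux.P_inj (t := t) hM hS
  have hQinj : Function.Injective ((Gm * Rm)ᵀ).mulVecLin := GQAux.Qt_inj (t := t) hM hS hA'
  have hdim : Module.finrank ℝ (Fin n × Fin p → ℝ) = n * p := by
    rw [Module.finrank_pi]
    simp
  have hrankQ : (Gm * Rm).rank = n * p := by
    rw [← Matrix.rank_transpose]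
    have h := LinearMap.finrank_range_add_finrank_ker ((Gm * Rm)ᵀ).mulVecLin
    rw [LinearMap.ker_eq_bot.mpr hQinj, finrank_bot, add_zero, hdim] at h
    exact h
  set Z := LinearMap.range Rm.mulVecLin with hZ
  set Y := LinearMap.ker Gm.mulVecLin ⊓ Z with hY
  have h5 := LinearMap.finrank_range_add_finrank_ker (Gm.mulVecLin.domRestrict Z)
  have hrange : LinearMap.range (Gm.mulVecLin.domRestrict Z)
      = LinearMap.range (Gm * Rm).mulVecLin := by
    rw [LinearMap.range_domRestrict, Matrix.mulVecLin_mul, LinearMap.range_comp, hZ]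
  have hkerf : Module.finrank ℝ (LinearMap.ker (Gm.mulVecLin.domRestrict Z))
      = Module.finrank ℝ Y := by
    rw [LinearMap.ker_domRestrict]
    have e := Submodule.equivMapOfInjective Z.subtype (Submodule.injective_subtype Z)
      ((LinearMap.ker Gm.mulVecLin).comap Z.subtype)
    rw [e.finrank_eq, Submodule.map_comap_subtype, hY, inf_comm]
  have h5' : (Gm * Rm).rank + Module.finrank ℝ Y = Rm.rank := by
    rw [Matrix.rank, Matrix.rank, ← hrange, ← hkerf]
    exact h5
  have hker_map : Submodule.map Pm.mulVecLin (LinearMap.ker H.mulVecLin) ≤ Y := by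
    rintro y hy
    obtain ⟨v, hv, rfl⟩ := Submodule.mem_map.mp hy
    refine Submodule.mem_inf.mpr ⟨?_, ?_⟩
    · rw [LinearMap.mem_ker, Matrix.mulVecLin_apply, Matrix.mulVecLin_apply,
        Matrix.mulVec_mulVec, hloc]
      have := LinearMap.mem_ker.mp hv
      rw [Matrix.mulVecLin_apply] at this
      exact this
    · rw [hZ]
      have : Pm.mulVecLin v = Rm.mulVecLin ((Dm * Gmᵀ).mulVecLin v) := by
        rw [hPm, Matrix.mulVecLin_mul]
        rfl
      rw [this]
      exact LinearMap.mem_range_self _ _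
  have hkerH_le : Module.finrank ℝ (LinearMap.ker H.mulVecLin)
      ≤ Module.finrank ℝ Y := by
    have e := Submodule.equivMapOfInjective Pm.mulVecLin hPinj (LinearMap.ker H.mulVecLin)
    rw [e.finrank_eq]
    exact Submodule.finrank_mono hker_map
  have h6 := LinearMap.finrank_range_add_finrank_ker H.mulVecLin
  rw [hdim] at h6
  have h7 : Rm.rank + m ≤ (n + 1) * p := GQAux.rank_R_le hme htot
  have e2 : (n - 1) * p + p = n * p := by
    have hn1 : n - 1 + 1 = n := Nat.succ_pred_eq_of_pos hn
    calc (n - 1) * p + p = ((n - 1) + 1) * p := by ring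
    _ = n * p := by rw [hn1]
  have e1 : (n + 1) * p = n * p + p := by ring
  have hHrank : H.rank + Module.finrank ℝ (LinearMap.ker H.mulVecLin) = n * p := h6
  rw [hH] at hHrank hkerH_le
  linarith [hHrank, hkerH_le, h5', hrankQ, h7, e1, e2]
end

section
/- Let p, n ≥ 1, let S = (S_0, …, S_{2n}) be a truncated matrix moment sequence whose moment matrix M(n) is positive definite, let t ∈ ℝ and m ∈ ℕ ∪ {0}. If m ≤ rank H_{x−t}(n−1) − (n−1)p, where H_{x−t}(n−1) is the (x−t)-localizing moment matrix of S, then there exists a minimal representing measure for S (pairwise distinct x_1,…,x_ℓ ∈ ℝ and nonzero PSD symmetric p×p matrices A_1,…,A_ℓ with S_i = Σ_j x_j^i A_j for 0 ≤ i ≤ 2n and Σ_j rank A_j = (n+1)p) whose multiplicity at t equals m. -/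
open Matrix

section GQPrivateAux

set_option linter.unusedSectionVars false
set_option linter.unusedVariables false
set_option maxHeartbeats 1000000

open Matrix LinearMap Module


section Core

variable {ι κ : Type*} [Fintype ι] [Fintype κ] [DecidableEq ι] [DecidableEq κ]

lemma gram_posDef (F : Matrix ι κ ℝ) (hF : Function.Injective F.mulVec) :
    (Fᵀ * F).PosDef := by
  refine posDef_iff_dotProduct_mulVec.mpr ⟨by
    simpa [conjTranspose_eq_transpose_of_trivial] using isHermitian_conjTranspose_mul_self F,
    fun x hx => ?_⟩
  have hre : dotProduct (star x) ((Fᵀ * F) *ᵥ x) = (F *ᵥ x) ⬝ᵥ (F *ᵥ x) := by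
    rw [star_trivial, ← mulVec_mulVec, dotProduct_mulVec, vecMul_transpose]
  rw [hre]
  have hFx : F *ᵥ x ≠ 0 := by
    intro h
    exact hx (hF (by simpa using h))
  have h1 : (F *ᵥ x) ⬝ᵥ (F *ᵥ x) ≠ 0 := fun h => hFx (dotProduct_self_eq_zero.mp h)
  have h2 : 0 ≤ (F *ᵥ x) ⬝ᵥ (F *ᵥ x) :=
    Finset.sum_nonneg fun i _ => mul_self_nonneg _
  exact lt_of_le_of_ne h2 (Ne.symm h1)

lemma gram_isUnit_det (F : Matrix ι κ ℝ) (hF : Function.Injective F.mulVec) :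
    IsUnit (Fᵀ * F).det :=
  isUnit_iff_ne_zero.mpr (gram_posDef F hF).det_pos.ne'

lemma exists_symm_mul_eq (F G : Matrix ι κ ℝ) (hF : Function.Injective F.mulVec)
    (hsym : (Fᵀ * G).IsSymm) : ∃ T : Matrix ι ι ℝ, T.IsSymm ∧ T * F = G := by
  set Wi := (Fᵀ * F)⁻¹ with hWi
  have hdet := gram_isUnit_det F hF
  have h1 : Wi * (Fᵀ * F) = 1 := nonsing_inv_mul _ hdet
  have hWsym : Wiᵀ = Wi := by
    rw [hWi, transpose_nonsing_inv, transpose_mul, transpose_transpose]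
  set L := G * Wi * Fᵀ with hL
  set P := F * Wi * Fᵀ with hP
  have hPsym : Pᵀ = P := by
    rw [hP, transpose_mul, transpose_mul, transpose_transpose, hWsym, Matrix.mul_assoc]
  have hLt : Lᵀ = F * Wi * Gᵀ := by
    rw [hL, transpose_mul, transpose_mul, transpose_transpose, hWsym, Matrix.mul_assoc]
  have key : P * L = Lᵀ * P := by
    have hGF : Gᵀ * F = Fᵀ * G := by
      have := hsym.eq
      rw [transpose_mul] at this
      exact this
    rw [hLt, hP, hL]
    calc F * Wi * Fᵀ * (G * Wi * Fᵀ) = F * Wi * (Fᵀ * G) * (Wi * Fᵀ) := by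
          simp only [Matrix.mul_assoc]
      _ = F * Wi * (Gᵀ * F) * (Wi * Fᵀ) := by rw [hGF]
      _ = F * Wi * Gᵀ * (F * Wi * Fᵀ) := by simp only [Matrix.mul_assoc]
  have hLF : L * F = G := by
    rw [hL]
    calc G * Wi * Fᵀ * F = G * (Wi * (Fᵀ * F)) := by simp only [Matrix.mul_assoc]
      _ = G := by rw [h1, Matrix.mul_one]
  have hPF : P * F = F := by
    rw [hP]
    calc F * Wi * Fᵀ * F = F * (Wi * (Fᵀ * F)) := by simp only [Matrix.mul_assoc]
      _ = F := by rw [h1, Matrix.mul_one]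
  clear hL hP hWi hLt h1 hWsym hdet
  clear_value L P Wi
  refine ⟨L + Lᵀ - Lᵀ * P, ?_, ?_⟩
  · show (L + Lᵀ - Lᵀ * P)ᵀ = L + Lᵀ - Lᵀ * P
    rw [transpose_sub, transpose_add, transpose_transpose, transpose_mul, transpose_transpose,
      hPsym, ← key]
    abel
  · rw [Matrix.sub_mul, Matrix.add_mul, hLF, Matrix.mul_assoc Lᵀ, hPF]
    abel

end Core



section Core2

variable {ι : Type*} [Fintype ι] [DecidableEq ι]

/-- The linear functional `x ↦ b ⬝ᵥ x`. -/
def dotL (b : ι → ℝ) : (ι → ℝ) →ₗ[ℝ] ℝ where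
  toFun x := b ⬝ᵥ x
  map_add' x y := dotProduct_add b x y
  map_smul' a x := by simp [dotProduct_smul]

@[simp] lemma dotL_apply (b x : ι → ℝ) : dotL b x = b ⬝ᵥ x := rfl

lemma finrank_inf_ker_add_one {V : Submodule ℝ (ι → ℝ)} {φ : (ι → ℝ) →ₗ[ℝ] ℝ} {u : ι → ℝ}
    (hu : u ∈ V) (hφu : φ u ≠ 0) :
    finrank ℝ ↥(V ⊓ LinearMap.ker φ) + 1 = finrank ℝ ↥V := by
  have h1 := LinearMap.finrank_range_add_finrank_ker (φ.comp V.subtype)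
  have hr : LinearMap.range (φ.comp V.subtype) = ⊤ := by
    rw [LinearMap.range_eq_top]
    intro y
    refine ⟨(y / φ u) • ⟨u, hu⟩, ?_⟩
    have : φ.comp V.subtype ⟨u, hu⟩ = φ u := rfl
    rw [_root_.map_smul, this, smul_eq_mul]
    field_simp
  have hker : LinearMap.ker (φ.comp V.subtype) = Submodule.comap V.subtype (LinearMap.ker φ) :=
    LinearMap.ker_comp _ _
  rw [hr, hker, finrank_top] at h1
  have h2 : finrank ℝ ↥(Submodule.comap V.subtype (LinearMap.ker φ))
      = finrank ℝ ↥(V ⊓ LinearMap.ker φ) := by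
    rw [← Submodule.map_comap_subtype, Submodule.finrank_map_subtype_eq]
  rw [h2] at h1
  rw [Module.finrank_self] at h1
  omega

lemma exists_li_family (R W : Submodule ℝ (ι → ℝ)) (m : ℕ)
    (hm : m + finrank ℝ ↥(R ⊓ W) ≤ finrank ℝ ↥R) :
    ∃ k : Fin m → (ι → ℝ), LinearIndependent ℝ k ∧ (∀ i, k i ∈ R) ∧
      ∀ x ∈ Submodule.span ℝ (Set.range k) ⊓ W, x = 0 := by
  obtain ⟨q, hq⟩ := Submodule.exists_isCompl (Submodule.comap R.subtype (R ⊓ W))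
  have hdim : finrank ℝ ↥(Submodule.comap R.subtype (R ⊓ W)) + finrank ℝ ↥q
      = finrank ℝ ↥R := Submodule.finrank_add_eq_of_isCompl hq
  have hcomap : finrank ℝ ↥(Submodule.comap R.subtype (R ⊓ W)) = finrank ℝ ↥(R ⊓ W) :=
    LinearEquiv.finrank_eq (Submodule.comapSubtypeEquivOfLe inf_le_left)
  set K₀ : Submodule ℝ (ι → ℝ) := Submodule.map R.subtype q with hK₀
  have hK₀R : K₀ ≤ R := Submodule.map_subtype_le R q
  have hK₀dim : finrank ℝ ↥K₀ = finrank ℝ ↥q := Submodule.finrank_map_subtype_eq R q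
  have hmq : m ≤ finrank ℝ ↥K₀ := by omega
  let b := finBasis ℝ ↥K₀
  let k : Fin m → (ι → ℝ) := fun i => (b (Fin.castLE hmq i) : ι → ℝ)
  have hli : LinearIndependent ℝ k := by
    have h1 : LinearIndependent ℝ fun i => b (Fin.castLE hmq i) :=
      b.linearIndependent.comp _ (Fin.castLE_injective hmq)
    exact h1.map' K₀.subtype (Submodule.ker_subtype K₀)
  have hkK₀ : ∀ i, k i ∈ K₀ := fun i => (b (Fin.castLE hmq i)).2
  refine ⟨k, hli, fun i => hK₀R (hkK₀ i), fun x hx => ?_⟩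
  obtain ⟨hxs, hxW⟩ := hx
  have hspan : Submodule.span ℝ (Set.range k) ≤ K₀ := by
    rw [Submodule.span_le]
    rintro _ ⟨i, rfl⟩
    exact hkK₀ i
  have hxK₀ : x ∈ K₀ := hspan hxs
  obtain ⟨y, hyq, hyx⟩ := hxK₀
  have hyRW : y ∈ Submodule.comap R.subtype (R ⊓ W) := by
    simp only [Submodule.mem_comap]
    exact ⟨y.2, by rw [hyx]; exact hxW⟩
  have hy : y ∈ q ⊓ Submodule.comap R.subtype (R ⊓ W) := ⟨hyq, hyRW⟩
  rw [inf_comm, hq.inf_eq_bot] at hy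
  rw [← hyx, hy]
  rfl

lemma vecMulVec_mulVec' (b c x : ι → ℝ) : vecMulVec b c *ᵥ x = (c ⬝ᵥ x) • b := by
  ext i
  simp only [Matrix.mulVec, vecMulVec_apply, dotProduct, Pi.smul_apply, smul_eq_mul,
    Finset.sum_mul, Finset.mul_sum]
  refine Finset.sum_congr rfl fun s _ => by ring

lemma descent_step {σ : Type*} [Fintype σ]
    (F G : Matrix ι σ ℝ) (hF : Function.Injective F.mulVec)
    (T : Matrix ι ι ℝ) (hTsym : T.IsSymm) (hTF : T * F = G)
    (u : ι → ℝ) (hu : T *ᵥ u = 0) (huU : u ∉ LinearMap.range F.mulVecLin) :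
    ∃ T' : Matrix ι ι ℝ, T'.IsSymm ∧ T' * F = G ∧
      finrank ℝ (LinearMap.ker T'.mulVecLin) + 1 = finrank ℝ (LinearMap.ker T.mulVecLin) := by
  classical
  have hdet := gram_isUnit_det F hF
  have h1 : (Fᵀ * F)⁻¹ * (Fᵀ * F) = 1 := nonsing_inv_mul _ hdet
  have h2 : (Fᵀ * F) * (Fᵀ * F)⁻¹ = 1 := mul_nonsing_inv _ hdet
  set z : σ → ℝ := (Fᵀ * F)⁻¹ *ᵥ (Fᵀ *ᵥ u) with hz
  set b : ι → ℝ := u - F *ᵥ z with hb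
  have hFb : Fᵀ *ᵥ b = 0 := by
    rw [hb, mulVec_sub, hz, mulVec_mulVec, mulVec_mulVec, mulVec_mulVec, h2,
      Matrix.one_mul, sub_self]
  have hbF : b ᵥ* F = 0 := by rw [← mulVec_transpose, hFb]
  have hbne : b ≠ 0 := by
    intro h0
    apply huU
    have : u = F *ᵥ z := by rwa [hb, sub_eq_zero] at h0
    exact ⟨z, this.symm⟩
  have hbu : b ⬝ᵥ u = b ⬝ᵥ b := by
    have husub : u - b = F *ᵥ z := by rw [hb, sub_sub_cancel]
    have : b ⬝ᵥ (u - b) = 0 := by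
      rw [husub, dotProduct_mulVec, ← mulVec_transpose, hFb, zero_dotProduct]
    rw [dotProduct_sub] at this
    linarith
  have hbb : b ⬝ᵥ b ≠ 0 := fun h => hbne (dotProduct_self_eq_zero.mp h)
  refine ⟨T + vecMulVec b b, hTsym.add (Matrix.IsSymm.ext fun i j => mul_comm _ _), ?_, ?_⟩
  · have hvF : vecMulVec b b * F = 0 := by
      ext i j
      have h3 : ∑ s, b s * F s j = 0 := by
        have := congrFun hbF j
        simpa [Matrix.vecMul, dotProduct] using this
      simp only [Matrix.mul_apply, vecMulVec_apply, Matrix.zero_apply, mul_assoc,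
        ← Finset.mul_sum]
      rw [h3, mul_zero]
    rw [Matrix.add_mul, hTF, hvF, add_zero]
  · have hker : LinearMap.ker (T + vecMulVec b b).mulVecLin
        = LinearMap.ker T.mulVecLin ⊓ LinearMap.ker (dotL b) := by
      ext x
      simp only [LinearMap.mem_ker, Submodule.mem_inf, mulVecLin_apply, dotL_apply]
      constructor
      · intro hx
        rw [add_mulVec, vecMulVec_mulVec'] at hx
        have huT : u ⬝ᵥ (T *ᵥ x) = 0 := by
          rw [dotProduct_mulVec, ← mulVec_transpose, hTsym.eq, hu, zero_dotProduct]
        have hdot := congrArg (fun v => u ⬝ᵥ v) hx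
        simp only [dotProduct_add, dotProduct_smul, huT, dotProduct_zero, smul_eq_mul,
          zero_add] at hdot
        have hub : u ⬝ᵥ b = b ⬝ᵥ b := by rw [dotProduct_comm]; exact hbu
        rw [hub] at hdot
        have hbx : b ⬝ᵥ x = 0 := by
          rcases mul_eq_zero.mp hdot with h | h
          · exact h
          · exact absurd h hbb
        refine ⟨?_, hbx⟩
        rwa [hbx, zero_smul, add_zero] at hx
      · rintro ⟨hx1, hx2⟩
        rw [add_mulVec, vecMulVec_mulVec', hx1, hx2, zero_smul, add_zero]
    rw [hker]
    have huker : u ∈ LinearMap.ker T.mulVecLin := by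
      simp only [LinearMap.mem_ker, mulVecLin_apply]; exact hu
    have hdbu : dotL b u ≠ 0 := by
      simp only [dotL_apply]
      rw [hbu]; exact hbb
    exact finrank_inf_ker_add_one huker hdbu

lemma exists_symm_ker_eq {κ : Type*} [Fintype κ] [DecidableEq κ]
    (Jm Bm : Matrix ι κ ℝ) (m : ℕ)
    (hJ : Function.Injective Jm.mulVec)
    (hB : Function.Injective Bm.mulVec)
    (hsym : (Jmᵀ * Bm).IsSymm)
    (hm : m + 2 * Fintype.card κ ≤ (Jmᵀ * Bm).rank + Fintype.card ι) :
    ∃ T : Matrix ι ι ℝ, T.IsSymm ∧ T * Jm = Bm ∧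
      finrank ℝ (LinearMap.ker T.mulVecLin) = m := by
  classical
  -- dimension bookkeeping
  have hJker : LinearMap.ker Jm.mulVecLin = ⊥ := LinearMap.ker_eq_bot.mpr hJ
  have hBker : LinearMap.ker Bm.mulVecLin = ⊥ := LinearMap.ker_eq_bot.mpr hB
  set W : Submodule ℝ (ι → ℝ) := LinearMap.range Jm.mulVecLin with hWdef
  set R : Submodule ℝ (ι → ℝ) := LinearMap.ker Bmᵀ.mulVecLin with hRdef
  have hWdim : finrank ℝ ↥W = Fintype.card κ := by
    have h := LinearMap.finrank_range_add_finrank_ker Jm.mulVecLin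
    rw [hJker, finrank_bot, Module.finrank_pi, ← hWdef] at h
    omega
  have hBrank : Bm.rank = Fintype.card κ := by
    have h := LinearMap.finrank_range_add_finrank_ker Bm.mulVecLin
    rw [hBker, finrank_bot, Module.finrank_pi] at h
    rw [Matrix.rank]
    omega
  have hRdim : finrank ℝ ↥R + Fintype.card κ = Fintype.card ι := by
    have h := LinearMap.finrank_range_add_finrank_ker Bmᵀ.mulVecLin
    rw [Module.finrank_pi, ← hRdef] at h
    have h2 : finrank ℝ ↥(LinearMap.range Bmᵀ.mulVecLin) = Fintype.card κ := by
      rw [← Matrix.rank, Matrix.rank_transpose, hBrank]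
    omega
  have hRW : R ⊓ W = Submodule.map Jm.mulVecLin (LinearMap.ker (Bmᵀ * Jm).mulVecLin) := by
    ext x
    simp only [Submodule.mem_inf, Submodule.mem_map, LinearMap.mem_ker, LinearMap.mem_range,
      hRdef, hWdef, mulVecLin_apply, Matrix.mulVecLin_mul, LinearMap.comp_apply]
    constructor
    · rintro ⟨hxR, v, rfl⟩
      exact ⟨v, by simpa [mulVecLin_apply] using hxR, rfl⟩
    · rintro ⟨v, hv, rfl⟩
      exact ⟨by simpa [mulVecLin_apply] using hv, v, rfl⟩
  have hRWdim : finrank ℝ ↥(R ⊓ W) + (Bmᵀ * Jm).rank = Fintype.card κ := by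
    have hJinj : Function.Injective Jm.mulVecLin := hJ
    have hmap : finrank ℝ ↥(R ⊓ W)
        = finrank ℝ ↥(LinearMap.ker (Bmᵀ * Jm).mulVecLin) := by
      rw [hRW]
      exact (LinearEquiv.finrank_eq
        (Submodule.equivMapOfInjective Jm.mulVecLin hJinj _)).symm
    have h := LinearMap.finrank_range_add_finrank_ker (Bmᵀ * Jm).mulVecLin
    rw [Module.finrank_pi] at h
    rw [hmap, ← Matrix.rank] at *
    omega
  have hrank_eq : (Bmᵀ * Jm).rank = (Jmᵀ * Bm).rank := by
    rw [← Matrix.transpose_transpose (Bmᵀ * Jm), transpose_mul, transpose_transpose,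
      Matrix.rank_transpose]
  have hrankle : (Jmᵀ * Bm).rank ≤ Fintype.card κ := Matrix.rank_le_card_width _
  have hm' : m + finrank ℝ ↥(R ⊓ W) ≤ finrank ℝ ↥R := by omega
  obtain ⟨k, hli, hkR, hspanW⟩ := exists_li_family R W m hm'
  have hkBt : ∀ r, Bmᵀ *ᵥ k r = 0 := fun r => hkR r
  -- combined matrices
  set F : Matrix ι (κ ⊕ Fin m) ℝ :=
    Matrix.of (fun i s => Sum.elim (fun j => Jm i j) (fun r => k r i) s) with hFdef
  set G : Matrix ι (κ ⊕ Fin m) ℝ :=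
    Matrix.of (fun i s => Sum.elim (fun j => Bm i j) (fun _ => (0 : ℝ)) s) with hGdef
  have hFmul : ∀ c : (κ ⊕ Fin m) → ℝ,
      F *ᵥ c = Jm *ᵥ (c ∘ Sum.inl) + ∑ r, c (Sum.inr r) • k r := by
    intro c
    ext i
    simp only [Matrix.mulVec, dotProduct, hFdef, Matrix.of_apply, Fintype.sum_sum_type,
      Sum.elim_inl, Sum.elim_inr, Pi.add_apply, Finset.sum_apply, Pi.smul_apply, smul_eq_mul,
      Function.comp_apply]
    congr 1
    exact Finset.sum_congr rfl fun r _ => mul_comm _ _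
  have hGmul : ∀ c : (κ ⊕ Fin m) → ℝ, G *ᵥ c = Bm *ᵥ (c ∘ Sum.inl) := by
    intro c
    ext i
    simp only [Matrix.mulVec, dotProduct, hGdef, Matrix.of_apply, Fintype.sum_sum_type,
      Sum.elim_inl, Sum.elim_inr, Function.comp_apply, zero_mul, Finset.sum_const_zero, add_zero]
  have hFinj : Function.Injective F.mulVec := by
    have h0 : ∀ c : (κ ⊕ Fin m) → ℝ, F *ᵥ c = 0 → c = 0 := by
      intro c hc
      rw [hFmul] at hc
      have hsum : ∑ r, c (Sum.inr r) • k r ∈ Submodule.span ℝ (Set.range k) :=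
        Submodule.sum_smul_mem _ _ fun r _ => Submodule.subset_span ⟨r, rfl⟩
      have hJc : Jm *ᵥ (c ∘ Sum.inl) = -(∑ r, c (Sum.inr r) • k r) :=
        eq_neg_of_add_eq_zero_left hc
      have hmem : Jm *ᵥ (c ∘ Sum.inl) ∈ Submodule.span ℝ (Set.range k) ⊓ W := by
        refine ⟨hJc ▸ neg_mem hsum, ⟨c ∘ Sum.inl, rfl⟩⟩
      have hz := hspanW _ hmem
      have hinl : c ∘ Sum.inl = 0 := hJ (by rw [hz, mulVec_zero])
      have hsum0 : ∑ r, c (Sum.inr r) • k r = 0 := by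
        have := hc
        rw [hz, zero_add] at this
        exact this
      have hinr := Fintype.linearIndependent_iff.mp hli _ hsum0
      funext s
      cases s with
      | inl j => exact congrFun hinl j
      | inr r => exact hinr r
    intro a b hab
    have : F *ᵥ (a - b) = 0 := by rw [mulVec_sub, hab, sub_self]
    have := h0 _ this
    exact sub_eq_zero.mp (by funext s; exact congrFun this s)
  have hsymFG : (Fᵀ * G).IsSymm := by
    apply Matrix.IsSymm.ext
    intro s s'
    cases s with
    | inl j =>
      cases s' with
      | inl j' =>
        have := hsym.apply j j'
        simpa [Matrix.mul_apply, hFdef, hGdef] using this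
      | inr r =>
        have h1 : (Bmᵀ *ᵥ k r) j = 0 := by rw [hkBt r]; rfl
        simp only [Matrix.mul_apply, hFdef, hGdef, Matrix.transpose_apply, Matrix.of_apply,
          Sum.elim_inl, Sum.elim_inr, mul_zero, Finset.sum_const_zero]
        rw [← h1]
        simp [Matrix.mulVec, dotProduct, mul_comm]
    | inr r =>
      cases s' with
      | inl j' =>
        have h1 : (Bmᵀ *ᵥ k r) j' = 0 := by rw [hkBt r]; rfl
        simp only [Matrix.mul_apply, hFdef, hGdef, Matrix.transpose_apply, Matrix.of_apply,
          Sum.elim_inl, Sum.elim_inr, mul_zero, Finset.sum_const_zero]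
        rw [← h1]
        simp [Matrix.mulVec, dotProduct, mul_comm]
      | inr r' =>
        simp [Matrix.mul_apply, hFdef, hGdef]
  obtain ⟨T₀, hT₀sym, hT₀F⟩ := exists_symm_mul_eq F G hFinj hsymFG
  -- consequences of T * F = G
  have hTJm : ∀ T : Matrix ι ι ℝ, T * F = G → T * Jm = Bm := by
    intro T hT
    ext i j
    have := congrFun (congrFun hT i) (Sum.inl j)
    simpa [Matrix.mul_apply, hFdef, hGdef] using this
  have hTk : ∀ T : Matrix ι ι ℝ, T * F = G → ∀ r, T *ᵥ k r = 0 := by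
    intro T hT r
    have hcol : F *ᵥ Pi.single (Sum.inr r) 1 = k r := by
      rw [mulVec_single]
      funext i
      simp [hFdef]
    have hGcol : G *ᵥ Pi.single (Sum.inr r) 1 = 0 := by
      rw [mulVec_single]
      funext i
      simp [hGdef]
    calc T *ᵥ k r = T *ᵥ (F *ᵥ Pi.single (Sum.inr r) 1) := by rw [hcol]
      _ = (T * F) *ᵥ Pi.single (Sum.inr r) 1 := by rw [mulVec_mulVec]
      _ = 0 := by rw [hT, hGcol]
  have hkerm : ∀ T : Matrix ι ι ℝ, T * F = G → m ≤ finrank ℝ (LinearMap.ker T.mulVecLin) := by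
    intro T hT
    have hsp : Submodule.span ℝ (Set.range k) ≤ LinearMap.ker T.mulVecLin := by
      rw [Submodule.span_le]
      rintro _ ⟨r, rfl⟩
      exact hTk T hT r
    have := Submodule.finrank_mono hsp
    rwa [finrank_span_eq_card hli, Fintype.card_fin] at this
  -- descent
  have main : ∀ dk (T : Matrix ι ι ℝ), T.IsSymm → T * F = G →
      finrank ℝ (LinearMap.ker T.mulVecLin) = m + dk →
      ∃ T' : Matrix ι ι ℝ, T'.IsSymm ∧ T' * F = G ∧
        finrank ℝ (LinearMap.ker T'.mulVecLin) = m := by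
    intro dk
    induction dk with
    | zero => exact fun T h1 h2 h3 => ⟨T, h1, h2, by omega⟩
    | succ d ih =>
      intro T h1 h2 h3
      have hsub : ¬(LinearMap.ker T.mulVecLin ≤ LinearMap.range F.mulVecLin) := by
        intro hle
        have hsp : LinearMap.ker T.mulVecLin ≤ Submodule.span ℝ (Set.range k) := by
          intro x hx
          obtain ⟨c, rfl⟩ := hle hx
          have hGc : G *ᵥ c = 0 := by
            have hx0 : T *ᵥ (F *ᵥ c) = 0 := hx
            rwa [mulVec_mulVec, h2] at hx0
          rw [hGmul] at hGc
          have hinl : c ∘ Sum.inl = 0 := hB (by rw [hGc, mulVec_zero])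
          have : F.mulVecLin c = ∑ r, c (Sum.inr r) • k r := by
            rw [mulVecLin_apply, hFmul, hinl, mulVec_zero, zero_add]
          rw [this]
          exact Submodule.sum_smul_mem _ _ fun r _ => Submodule.subset_span ⟨r, rfl⟩
        have := Submodule.finrank_mono hsp
        rw [finrank_span_eq_card hli, Fintype.card_fin, h3] at this
        omega
      obtain ⟨u, huker, huU⟩ := SetLike.not_le_iff_exists.mp hsub
      obtain ⟨T', ha, hb', hc⟩ := descent_step F G hFinj T h1 h2 u huker huU
      exact ih T' ha hb' (by omega)
  obtain ⟨dk, hdk⟩ : ∃ dk, finrank ℝ (LinearMap.ker T₀.mulVecLin) = m + dk :=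
    ⟨finrank ℝ (LinearMap.ker T₀.mulVecLin) - m, by have := hkerm T₀ hT₀F; omega⟩
  obtain ⟨T, hTsym, hTF, hTfin⟩ := main dk T₀ hT₀sym hT₀F hdk
  exact ⟨T, hTsym, hTJm T hTF, hTfin⟩

end Core2


namespace GQAux

variable {p n : ℕ}

/-- Degree-embedding matrix. -/
def Jmat (p n : ℕ) : Matrix (Fin (n + 1) × Fin p) (Fin n × Fin p) ℝ :=
  Matrix.of fun r c => if r = (c.1.castSucc, c.2) then 1 else 0

/-- Degree-raising (shift) matrix. -/
def Xmat (p n : ℕ) : Matrix (Fin (n + 1) × Fin p) (Fin n × Fin p) ℝ :=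
  Matrix.of fun r c => if r = (c.1.succ, c.2) then 1 else 0

lemma mul_Jmat {α : Type*} [Fintype α] (A : Matrix α (Fin (n + 1) × Fin p) ℝ) (x : α)
    (c : Fin n × Fin p) : (A * Jmat p n) x c = A x (c.1.castSucc, c.2) := by
  simp only [Matrix.mul_apply, Jmat, Matrix.of_apply, mul_ite, mul_one, mul_zero]
  rw [Finset.sum_ite_eq' Finset.univ (c.1.castSucc, c.2) (fun r => A x r)]
  simp

lemma mul_Xmat {α : Type*} [Fintype α] (A : Matrix α (Fin (n + 1) × Fin p) ℝ) (x : α)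
    (c : Fin n × Fin p) : (A * Xmat p n) x c = A x (c.1.succ, c.2) := by
  simp only [Matrix.mul_apply, Xmat, Matrix.of_apply, mul_ite, mul_one, mul_zero]
  rw [Finset.sum_ite_eq' Finset.univ (c.1.succ, c.2) (fun r => A x r)]
  simp

lemma transpose_Jmat_mul {α : Type*} [Fintype α] (A : Matrix (Fin (n + 1) × Fin p) α ℝ)
    (c : Fin n × Fin p) (x : α) : ((Jmat p n)ᵀ * A) c x = A (c.1.castSucc, c.2) x := by
  simp only [Matrix.mul_apply, Jmat, Matrix.transpose_apply, Matrix.of_apply, ite_mul, one_mul,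
    zero_mul]
  rw [Finset.sum_ite_eq' Finset.univ (c.1.castSucc, c.2) (fun r => A r x)]
  simp

lemma transpose_Xmat_mul {α : Type*} [Fintype α] (A : Matrix (Fin (n + 1) × Fin p) α ℝ)
    (c : Fin n × Fin p) (x : α) : ((Xmat p n)ᵀ * A) c x = A (c.1.succ, c.2) x := by
  simp only [Matrix.mul_apply, Xmat, Matrix.transpose_apply, Matrix.of_apply, ite_mul, one_mul,
    zero_mul]
  rw [Finset.sum_ite_eq' Finset.univ (c.1.succ, c.2) (fun r => A r x)]
  simp

lemma Jmat_mulVec (v : Fin n × Fin p → ℝ) (j : Fin n) (b : Fin p) :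
    (Jmat p n *ᵥ v) (j.castSucc, b) = v (j, b) := by
  simp only [Matrix.mulVec, dotProduct, Jmat, Matrix.of_apply, ite_mul, one_mul, zero_mul]
  rw [Finset.sum_eq_single (j, b)]
  · simp
  · intro c _ hc
    rw [if_neg]
    intro h
    apply hc
    obtain ⟨h1, h2⟩ := Prod.mk.injEq .. ▸ h
    exact (Prod.ext (Fin.castSucc_injective n h1) h2).symm
  · simp

lemma Xmat_mulVec (v : Fin n × Fin p → ℝ) (j : Fin n) (b : Fin p) :
    (Xmat p n *ᵥ v) (j.succ, b) = v (j, b) := by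
  simp only [Matrix.mulVec, dotProduct, Xmat, Matrix.of_apply, ite_mul, one_mul, zero_mul]
  rw [Finset.sum_eq_single (j, b)]
  · simp
  · intro c _ hc
    rw [if_neg]
    intro h
    apply hc
    obtain ⟨h1, h2⟩ := Prod.mk.injEq .. ▸ h
    exact (Prod.ext (Fin.succ_injective n h1) h2).symm
  · simp

lemma Jmat_mulVec_succ (v : Fin n × Fin p → ℝ) (j : Fin n) (b : Fin p) :
    (Jmat p n *ᵥ v) (j.succ, b) =
      if h : (j : ℕ) + 1 < n then v (⟨(j : ℕ) + 1, h⟩, b) else 0 := by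
  simp only [Matrix.mulVec, dotProduct, Jmat, Matrix.of_apply, ite_mul, one_mul, zero_mul]
  split_ifs with h
  · rw [Finset.sum_eq_single (⟨(j : ℕ) + 1, h⟩, b)]
    · rw [if_pos]
      apply Prod.ext _ rfl
      apply Fin.ext
      simp
    · intro c _ hc
      rw [if_neg]
      intro hh
      apply hc
      obtain ⟨h1, h2⟩ := Prod.mk.injEq .. ▸ hh
      have : (c.1 : ℕ) = (j : ℕ) + 1 := by
        have := congrArg Fin.val h1
        simpa using this.symm
      exact Prod.ext (Fin.ext (by simp [this])) h2.symm
    · simp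
  · apply Finset.sum_eq_zero
    intro c _
    rw [if_neg]
    intro hh
    obtain ⟨h1, h2⟩ := Prod.mk.injEq .. ▸ hh
    apply h
    have := congrArg Fin.val h1
    simp at this
    omega

lemma Jmat_injective : Function.Injective (Jmat p n).mulVec := by
  intro v w h
  funext c
  have := congrFun h (c.1.castSucc, c.2)
  rwa [Jmat_mulVec, Jmat_mulVec] at this

lemma Bmat_injective (t : ℝ) : Function.Injective (Xmat p n - t • Jmat p n).mulVec := by
  have key : ∀ v : Fin n × Fin p → ℝ, (Xmat p n - t • Jmat p n) *ᵥ v = 0 → v = 0 := by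
    intro v hv
    have hrel : ∀ (j : Fin n) (b : Fin p),
        v (j, b) = t * (if h : (j : ℕ) + 1 < n then v (⟨(j : ℕ) + 1, h⟩, b) else 0) := by
      intro j b
      have := congrFun hv (j.succ, b)
      rw [Matrix.sub_mulVec, Matrix.smul_mulVec] at this
      simp only [Pi.sub_apply, Pi.smul_apply, Pi.zero_apply, smul_eq_mul] at this
      rw [Xmat_mulVec, Jmat_mulVec_succ] at this
      linarith
    have H : ∀ (d : ℕ) (j : Fin n) (b : Fin p), n ≤ (j : ℕ) + 1 + d → v (j, b) = 0 := by
      intro d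
      induction d with
      | zero =>
        intro j b hj
        rw [hrel j b, dif_neg (by omega), mul_zero]
      | succ d ih =>
        intro j b hj
        rw [hrel j b]
        split_ifs with h
        · rw [ih ⟨(j : ℕ) + 1, h⟩ b (by simp; omega), mul_zero]
        · rw [mul_zero]
    funext c
    obtain ⟨j, b⟩ := c
    exact H n j b (by omega)
  intro a b hab
  have : (Xmat p n - t • Jmat p n) *ᵥ (a - b) = 0 := by rw [mulVec_sub, hab, sub_self]
  exact sub_eq_zero.mp (key _ this)

section WithS

variable (t : ℝ) (S : ℕ → Matrix (Fin p) (Fin p) ℝ)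

lemma loc_eq (hn : 1 ≤ n) :
    (Jmat p n)ᵀ * (momentMatrix p n S * (Xmat p n - t • Jmat p n)) = locMatrix p n t S := by
  ext c c'
  rw [transpose_Jmat_mul]
  rw [Matrix.mul_sub, Matrix.mul_smul]
  simp only [Matrix.sub_apply, Matrix.smul_apply, smul_eq_mul]
  rw [mul_Xmat, mul_Jmat]
  simp only [momentMatrix, locMatrix, Fin.coe_castSucc, Fin.val_succ]
  ring_nf

lemma loc_isSymm (hSsym : ∀ i ≤ 2 * n, (S i).IsSymm) :
    (locMatrix p n t S).IsSymm := by
  apply Matrix.IsSymm.ext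
  intro c c'
  have h1 : (c'.1 : ℕ) + (c.1 : ℕ) + 1 ≤ 2 * n := by
    have := c.1.isLt; have := c'.1.isLt; omega
  have h2 : (c'.1 : ℕ) + (c.1 : ℕ) ≤ 2 * n := by omega
  simp only [locMatrix]
  rw [(hSsym _ h1).apply, (hSsym _ h2).apply, Nat.add_comm (c'.1 : ℕ) (c.1 : ℕ)]

end WithS

lemma spectral_package {ι : Type*} [Fintype ι] [DecidableEq ι]
    (T : Matrix ι ι ℝ) (hT : T.IsHermitian) :
    ∃ (ξ : ι → ℝ) (U : Matrix ι ι ℝ),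
      T * U = U * Matrix.diagonal ξ ∧
      U * Uᵀ = 1 ∧ Uᵀ * U = 1 ∧
      ∀ s : ℝ, (Finset.univ.filter (fun k => ξ k = s)).card
          = finrank ℝ (LinearMap.ker (T - s • 1).mulVecLin) := by
  classical
  set ξ := hT.eigenvalues with hxi
  set U : Matrix ι ι ℝ := (hT.eigenvectorUnitary : Matrix ι ι ℝ) with hU
  have hofReal : (RCLike.ofReal ∘ ξ : ι → ℝ) = ξ := funext fun k => rfl
  have hstar : star U = Uᵀ := by
    rw [Matrix.star_eq_conjTranspose, conjTranspose_eq_transpose_of_trivial]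
  have hmem := hT.eigenvectorUnitary.2
  rw [Unitary.mem_iff] at hmem
  have hU1 : Uᵀ * U = 1 := by rw [← hstar]; exact hmem.1
  have hU2 : U * Uᵀ = 1 := by rw [← hstar]; exact hmem.2
  have hspec : T = U * Matrix.diagonal ξ * Uᵀ := by
    have := hT.spectral_theorem
    rw [Unitary.conjStarAlgAut_apply] at this
    rwa [← hU, ← hxi, hofReal, hstar] at this
  have hTU : T * U = U * Matrix.diagonal ξ := by
    rw [hspec, Matrix.mul_assoc, Matrix.mul_assoc, hU1, Matrix.mul_one]
  have hdetU : IsUnit U.det := by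
    apply IsUnit.of_mul_eq_one (Uᵀ.det)
    rw [← Matrix.det_mul, hU2, Matrix.det_one]
  have hdetUt : IsUnit (Uᵀ).det := by rwa [Matrix.det_transpose]
  refine ⟨ξ, U, hTU, hU2, hU1, fun s => ?_⟩
  have hdecomp : T - s • 1 = U * Matrix.diagonal (fun k => ξ k - s) * Uᵀ := by
    have hs1 : s • (1 : Matrix ι ι ℝ) = Matrix.diagonal (fun _ => s) := by
      ext i j
      by_cases h : i = j <;> simp [Matrix.one_apply, Matrix.diagonal_apply, h]
    have h1 : Matrix.diagonal (fun k => ξ k - s) = Matrix.diagonal ξ - s • 1 := by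
      rw [hs1, ← Matrix.diagonal_sub]
    rw [h1, Matrix.mul_sub, Matrix.sub_mul, ← hspec]
    congr 1
    rw [Matrix.mul_smul, Matrix.mul_one, Matrix.smul_mul, hU2]
  have hrank : (T - s • 1).rank = (Matrix.diagonal (fun k => ξ k - s)).rank := by
    rw [hdecomp, Matrix.rank_mul_eq_left_of_isUnit_det _ _ hdetUt,
      Matrix.rank_mul_eq_right_of_isUnit_det _ _ hdetU]
  have hrankdiag : (Matrix.diagonal (fun k => ξ k - s)).rank
      = (Finset.univ.filter (fun k => ξ k - s ≠ 0)).card := by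
    rw [Matrix.rank_diagonal, Fintype.card_subtype]
  have hnullity := LinearMap.finrank_range_add_finrank_ker (T - s • 1).mulVecLin
  rw [Module.finrank_pi] at hnullity
  have hfilters := Finset.card_filter_add_card_filter_not
    (s := (Finset.univ : Finset ι)) (p := fun k => ξ k = s)
  have hne : (Finset.univ.filter (fun k => ¬ ξ k = s)).card
      = (Finset.univ.filter (fun k => ξ k - s ≠ 0)).card := by
    congr 1
    apply Finset.filter_congr
    intro k _
    simp [sub_eq_zero]
  have hrank' : (T - s • 1).rank = finrank ℝ ↥(LinearMap.range (T - s • 1).mulVecLin) := rfl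
  rw [Finset.card_univ] at hfilters
  omega

lemma posSemidef_vecMulVec {α : Type*} [Fintype α] (v : α → ℝ) :
    (vecMulVec v v).PosSemidef := by
  refine posSemidef_iff_dotProduct_mulVec.mpr ⟨?_, ?_⟩
  · rw [Matrix.IsHermitian, conjTranspose_eq_transpose_of_trivial]
    exact Matrix.IsSymm.ext fun i j => mul_comm _ _
  · intro x
    have h1 : vecMulVec v v *ᵥ x = (v ⬝ᵥ x) • v := by
      ext i
      simp only [Matrix.mulVec, vecMulVec_apply, dotProduct, Pi.smul_apply, smul_eq_mul,
        Finset.sum_mul, Finset.mul_sum]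
      refine Finset.sum_congr rfl fun s _ => by ring
    rw [star_trivial, h1, dotProduct_smul, smul_eq_mul, dotProduct_comm]
    exact mul_self_nonneg _

lemma sqrt_facts {ι : Type*} [Fintype ι] [DecidableEq ι] (M : Matrix ι ι ℝ) (hM : M.PosDef) :
    ∃ C : Matrix ι ι ℝ, C * C = M ∧ Cᵀ = C ∧ Function.Injective C.mulVec ∧ IsUnit C.det := by
  obtain ⟨C, hCherm, hCC⟩ : ∃ C : Matrix ι ι ℝ, C.IsHermitian ∧ C * C = M := by
    open scoped MatrixOrder in
    obtain ⟨X, hX, -, hXX⟩ := CFC.exists_sqrt_of_isSelfAdjoint_of_quasispectrumRestricts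
      hM.posSemidef.isHermitian (QuasispectrumRestricts.nnreal_of_nonneg hM.posSemidef.nonneg)
    exact ⟨X, hX, hXX⟩
  have hCt : Cᵀ = C := by
    rw [← conjTranspose_eq_transpose_of_trivial]
    exact hCherm
  have hdet : IsUnit C.det := by
    rw [isUnit_iff_ne_zero]
    intro h0
    have : M.det = 0 := by rw [← hCC, Matrix.det_mul, h0, zero_mul]
    exact hM.det_pos.ne' this
  refine ⟨C, hCC, hCt, ?_, hdet⟩
  intro a b hab
  have h1 : C⁻¹ *ᵥ (C *ᵥ a) = C⁻¹ *ᵥ (C *ᵥ b) := by rw [hab]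
  rwa [mulVec_mulVec, mulVec_mulVec, nonsing_inv_mul _ hdet, one_mulVec, one_mulVec] at h1

end GQAux

end GQPrivateAux

/-- If `m ≤ rank H_{x-t}(n-1) - (n-1)p`, then there exists a minimal representing
measure with multiplicity `m` at `t`. -/
theorem gaussian_quadrature_prescribed_atom_sufficiency (p n : ℕ) (hp : 1 ≤ p) (hn : 1 ≤ n)
    (S : ℕ → Matrix (Fin p) (Fin p) ℝ)
    (hSsym : ∀ i ≤ 2 * n, (S i).IsSymm)
    (hM : (momentMatrix p n S).PosDef)
    (t : ℝ) (m : ℕ)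
    (hm : m + (n - 1) * p ≤ (locMatrix p n t S).rank) :
    ∃ (ℓ : ℕ) (x : Fin ℓ → ℝ) (A : Fin ℓ → Matrix (Fin p) (Fin p) ℝ),
      IsMinimalRepMeasure p n ℓ S x A ∧ MultiplicityEq ℓ x A t m := by
  classical
  obtain ⟨C, hCC, hCt, hCinj, hCdet⟩ := GQAux.sqrt_facts _ hM
  set B₀ : Matrix (Fin (n + 1) × Fin p) (Fin n × Fin p) ℝ :=
    GQAux.Xmat p n - t • GQAux.Jmat p n with hB₀def
  set Jm := C * GQAux.Jmat p n with hJmdef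
  set Bm := C * B₀ with hBmdef
  have hJmmul : ∀ v, Jm *ᵥ v = C *ᵥ (GQAux.Jmat p n *ᵥ v) := fun v => by
    rw [hJmdef, ← mulVec_mulVec]
  have hBmmul : ∀ v, Bm *ᵥ v = C *ᵥ (B₀ *ᵥ v) := fun v => by
    rw [hBmdef, ← mulVec_mulVec]
  have hJminj : Function.Injective Jm.mulVec := by
    intro a b hab
    apply GQAux.Jmat_injective
    apply hCinj
    rw [← hJmmul, ← hJmmul]
    exact hab
  have hBminj : Function.Injective Bm.mulVec := by
    intro a b hab
    apply GQAux.Bmat_injective t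
    apply hCinj
    rw [← hBmmul, ← hBmmul]
    exact hab
  have hJB : Jmᵀ * Bm = locMatrix p n t S := by
    rw [hJmdef, hBmdef, transpose_mul, hCt]
    calc (GQAux.Jmat p n)ᵀ * C * (C * B₀)
        = (GQAux.Jmat p n)ᵀ * (C * (C * B₀)) := by rw [Matrix.mul_assoc]
      _ = (GQAux.Jmat p n)ᵀ * (C * C * B₀) := by rw [Matrix.mul_assoc C C B₀]
      _ = (GQAux.Jmat p n)ᵀ * (momentMatrix p n S * B₀) := by rw [hCC]
      _ = locMatrix p n t S := GQAux.loc_eq t S hn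
  have hsymJB : (Jmᵀ * Bm).IsSymm := by
    rw [hJB]; exact GQAux.loc_isSymm t S hSsym
  have hmcore : m + 2 * Fintype.card (Fin n × Fin p)
      ≤ (Jmᵀ * Bm).rank + Fintype.card (Fin (n + 1) × Fin p) := by
    rw [hJB]
    simp only [Fintype.card_prod, Fintype.card_fin]
    have h2n : (n - 1) * p + (n + 1) * p = 2 * (n * p) := by
      have h1 : n - 1 + (n + 1) = 2 * n := by omega
      calc (n - 1) * p + (n + 1) * p = (n - 1 + (n + 1)) * p := (Nat.add_mul _ _ _).symm
        _ = 2 * n * p := by rw [h1]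
        _ = 2 * (n * p) := by ring
    linarith [hm, h2n]
  obtain ⟨T, hTsym, hTJ, hTker⟩ := exists_symm_ker_eq Jm Bm m hJminj hBminj hsymJB hmcore
  set T₀ : Matrix (Fin (n + 1) × Fin p) (Fin (n + 1) × Fin p) ℝ := T + t • 1 with hT₀def
  have hT₀symm : T₀ᵀ = T₀ := by
    rw [hT₀def, transpose_add, transpose_smul, transpose_one, hTsym.eq]
  have hT₀herm : T₀.IsHermitian := by
    rw [Matrix.IsHermitian, conjTranspose_eq_transpose_of_trivial]
    exact hT₀symm
  obtain ⟨ξ, U, hTU, hUUt, hUtU, hcount⟩ := GQAux.spectral_package T₀ hT₀herm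
  have hcnt : (Finset.univ.filter fun k => ξ k = t).card = m := by
    have h1 : T₀ - t • 1 = T := by rw [hT₀def]; abel
    rw [hcount t, h1, hTker]
  set y : (Fin (n + 1) × Fin p) → (Fin (n + 1) × Fin p) → ℝ := fun k α => (C * U) α k with hydef
  set w : (Fin (n + 1) × Fin p) → Fin p → ℝ := fun k a => y k (⟨0, Nat.succ_pos n⟩, a) with hwdef
  -- moment matrix as a sum of rank ones
  have hMsum : ∀ α β, momentMatrix p n S α β = ∑ k, y k α * y k β := by
    intro α β
    have h1 : (C * U) * (C * U)ᵀ = momentMatrix p n S := by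
      rw [transpose_mul, hCt]
      calc C * U * (Uᵀ * C) = C * (U * Uᵀ) * C := by simp only [Matrix.mul_assoc]
        _ = momentMatrix p n S := by rw [hUUt, Matrix.mul_one, hCC]
    have h2 := congrFun (congrFun h1 α) β
    rw [Matrix.mul_apply] at h2
    simp only [Matrix.transpose_apply] at h2
    rw [← h2]
  -- the three-term recurrence
  have hCX : C * GQAux.Xmat p n = T₀ * Jm := by
    have h1 : T₀ * Jm = T * Jm + t • Jm := by
      rw [hT₀def, Matrix.add_mul, Matrix.smul_mul, Matrix.one_mul]
    rw [h1, hTJ, hBmdef, hB₀def, Matrix.mul_sub, Matrix.mul_smul, hJmdef]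
    abel
  have hXtCU : (GQAux.Xmat p n)ᵀ * (C * U)
      = ((GQAux.Jmat p n)ᵀ * (C * U)) * Matrix.diagonal ξ := by
    have hJmtU : Jmᵀ * (T₀ * U) = ((GQAux.Jmat p n)ᵀ * (C * U)) * Matrix.diagonal ξ := by
      rw [hTU, hJmdef, transpose_mul, hCt]
      simp only [Matrix.mul_assoc]
    calc (GQAux.Xmat p n)ᵀ * (C * U) = ((GQAux.Xmat p n)ᵀ * C) * U := by
          rw [Matrix.mul_assoc]
      _ = ((C * GQAux.Xmat p n)ᵀ) * U := by rw [transpose_mul, hCt]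
      _ = ((T₀ * Jm)ᵀ) * U := by rw [hCX]
      _ = (Jmᵀ * T₀) * U := by rw [transpose_mul, hT₀symm]
      _ = Jmᵀ * (T₀ * U) := by rw [Matrix.mul_assoc]
      _ = ((GQAux.Jmat p n)ᵀ * (C * U)) * Matrix.diagonal ξ := hJmtU
  have hrec : ∀ k (j : Fin n) (b : Fin p), y k (j.succ, b) = ξ k * y k (j.castSucc, b) := by
    intro k j b
    have h1 := congrFun (congrFun hXtCU (j, b)) k
    rw [GQAux.transpose_Xmat_mul, Matrix.mul_diagonal, GQAux.transpose_Jmat_mul] at h1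
    rw [hydef]
    simpa [mul_comm] using h1
  -- power formula for the rows
  have hpow : ∀ k (i : Fin (n + 1)) (a : Fin p), y k (i, a) = ξ k ^ (i : ℕ) * w k a := by
    intro k i a
    have key : ∀ (iv : ℕ) (h : iv < n + 1), y k (⟨iv, h⟩, a) = ξ k ^ iv * w k a := by
      intro iv
      induction iv with
      | zero => intro h; rw [hwdef, pow_zero, one_mul]
      | succ iv ih =>
        intro h
        have hlt : iv < n := by omega
        have h1 : (⟨iv + 1, h⟩ : Fin (n + 1)) = (⟨iv, hlt⟩ : Fin n).succ := by
          apply Fin.ext; simp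
        have h2 : ((⟨iv, hlt⟩ : Fin n).castSucc : Fin (n + 1)) = ⟨iv, by omega⟩ := by
          apply Fin.ext; simp
        rw [h1, hrec k ⟨iv, hlt⟩ a, h2, ih (by omega)]
        ring
    calc y k (i, a) = y k (⟨(i : ℕ), i.isLt⟩, a) := by rw [Fin.eta]
      _ = ξ k ^ (i : ℕ) * w k a := key (i : ℕ) i.isLt
  -- scalar moment decomposition
  have hSdec : ∀ D, D ≤ 2 * n → ∀ a b, S D a b = ∑ k, ξ k ^ D * (w k a * w k b) := by
    intro D hD a b
    have hi : min D n < n + 1 := by omega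
    have hj : D - min D n < n + 1 := by omega
    have hij : min D n + (D - min D n) = D := by omega
    have h1 := hMsum (⟨min D n, hi⟩, a) (⟨D - min D n, hj⟩, b)
    simp only [momentMatrix] at h1
    rw [hij] at h1
    rw [h1]
    refine Finset.sum_congr rfl fun k _ => ?_
    rw [hpow k ⟨min D n, hi⟩ a, hpow k ⟨D - min D n, hj⟩ b]
    have hpowD : ξ k ^ D = ξ k ^ min D n * ξ k ^ (D - min D n) := by
      rw [← pow_add, hij]
    rw [hpowD]
    simp only [Fin.val_mk]
    ring
  -- linear independence of the rows
  have hyLI : ∀ c : (Fin (n + 1) × Fin p) → ℝ, ∑ k, c k • y k = 0 → c = 0 := by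
    intro c hc
    have hdetU : IsUnit U.det :=
      IsUnit.of_mul_eq_one (Uᵀ.det) (by rw [← Matrix.det_mul, hUUt, Matrix.det_one])
    have hdetCU : IsUnit (C * U).det := by
      rw [Matrix.det_mul]; exact hCdet.mul hdetU
    have hmv : (C * U) *ᵥ c = 0 := by
      funext α
      have h3 := congrFun hc α
      simp only [Finset.sum_apply, Pi.smul_apply, smul_eq_mul, Pi.zero_apply] at h3
      show (C * U) α ⬝ᵥ c = 0
      rw [dotProduct]
      rw [← h3]
      refine Finset.sum_congr rfl fun k _ => ?_
      rw [hydef, mul_comm]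
    have h4 := congrArg (fun v => (C * U)⁻¹ *ᵥ v) hmv
    simpa [mulVec_mulVec, nonsing_inv_mul _ hdetCU, one_mulVec, mulVec_zero] using h4
  -- the atoms
  set img := Finset.image ξ Finset.univ with himg
  set ℓ := img.card with hℓdef
  set e := img.orderIsoOfFin rfl with hedef
  set x : Fin ℓ → ℝ := fun j => (e j : ℝ) with hxdef
  have hxinj : Function.Injective x := by
    intro a b hab
    exact e.injective (Subtype.coe_injective hab)
  have hximg : ∀ j, x j ∈ img := fun j => (e j).2
  have hsurj : ∀ r ∈ img, ∃ j, x j = r := by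
    intro r hr
    refine ⟨e.symm ⟨r, hr⟩, ?_⟩
    rw [hxdef]
    simp
  have hgmem : ∀ k, ξ k ∈ img := fun k => by
    rw [himg]; exact Finset.mem_image_of_mem ξ (Finset.mem_univ k)
  set g : (Fin (n + 1) × Fin p) → Fin ℓ := fun k => e.symm ⟨ξ k, hgmem k⟩ with hgdef
  have hgx : ∀ k, x (g k) = ξ k := by
    intro k
    rw [hxdef, hgdef]
    simp
  have hfib : ∀ k j, ξ k = x j ↔ g k = j := by
    intro k j
    constructor
    · intro hkj
      apply hxinj
      rw [hgx, hkj]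
    · intro hkj
      rw [← hgx k, hkj]
  set A : Fin ℓ → Matrix (Fin p) (Fin p) ℝ :=
    fun j => ∑ k ∈ Finset.univ.filter (fun k => g k = j), vecMulVec (w k) (w k) with hAdef
  have hApsd : ∀ j, (A j).PosSemidef := by
    intro j
    rw [hAdef]
    refine Finset.sum_induction _ _ (fun a b ha hb => ha.add hb) Matrix.PosSemidef.zero
      fun k _ => GQAux.posSemidef_vecMulVec (w k)
  have hfibcard : ∀ j : Fin ℓ, 0 < (Finset.univ.filter (fun k => g k = j)).card := by
    intro j
    rw [Finset.card_pos]
    have h5 := hximg j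
    rw [himg] at h5
    obtain ⟨k, _, hk⟩ := Finset.mem_image.mp h5
    exact ⟨k, Finset.mem_filter.mpr ⟨Finset.mem_univ k, (hfib k j).mp hk⟩⟩
  -- linear independence of w on each fiber
  have hwLI : ∀ j : Fin ℓ, ∀ c : {k // g k = j} → ℝ,
      (∑ k : {k // g k = j}, c k • w k.1) = 0 → ∀ k, c k = 0 := by
    intro j c hc
    set c' : (Fin (n + 1) × Fin p) → ℝ := fun k => if h : g k = j then c ⟨k, h⟩ else 0 with hc'def
    have h0 : ∑ k, c' k • y k = 0 := by
      funext α
      obtain ⟨i, a⟩ := α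
      simp only [Finset.sum_apply, Pi.smul_apply, smul_eq_mul, Pi.zero_apply]
      have hterm : ∀ k, c' k * y k (i, a) = x j ^ (i : ℕ) * (c' k * w k a) := by
        intro k
        by_cases h : g k = j
        · have hxk : ξ k = x j := (hfib k j).mpr h
          rw [hpow k i a, hxk]; ring
        · simp [hc'def, h]
      rw [Finset.sum_congr rfl fun k _ => hterm k, ← Finset.mul_sum]
      have hsplit : ∑ k, c' k * w k a = ∑ k : {k // g k = j}, c k * w k.1 a := by
        rw [← Finset.sum_filter_add_sum_filter_not Finset.univ (fun k => g k = j)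
          (fun k => c' k * w k a)]
        have hz : ∑ k ∈ Finset.univ.filter (fun k => ¬ g k = j), c' k * w k a = 0 :=
          Finset.sum_eq_zero fun k hk => by
            simp [hc'def, (Finset.mem_filter.mp hk).2]
        rw [hz, add_zero]
        rw [Finset.sum_subtype (p := fun k => g k = j) (Finset.univ.filter (fun k => g k = j))
          (fun k => by simp) (fun k => c' k * w k a)]
        refine Finset.sum_congr rfl fun k _ => ?_
        rw [hc'def]
        simp [k.2]
      rw [hsplit]
      have h6 := congrFun hc a
      simp only [Finset.sum_apply, Pi.smul_apply, smul_eq_mul, Pi.zero_apply] at h6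
      rw [h6, mul_zero]
    intro k
    have h7 := congrFun (hyLI c' h0) k.1
    rw [hc'def] at h7
    simpa [k.2] using h7
  have hrankA : ∀ j, (A j).rank = (Finset.univ.filter (fun k => g k = j)).card := by
    intro j
    set Wm : Matrix {k // g k = j} (Fin p) ℝ := Matrix.of (fun k a => w k.1 a) with hWmdef
    have hAW : A j = Wmᵀ * Wm := by
      simp only [hAdef]
      ext a b
      rw [Matrix.sum_apply, Matrix.mul_apply]
      simp only [vecMulVec_apply, Matrix.transpose_apply, hWmdef, Matrix.of_apply]
      rw [Finset.sum_subtype (p := fun k => g k = j) (Finset.univ.filter (fun k => g k = j))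
        (fun k => by simp) (fun k => w k a * w k b)]
    rw [hAW, Matrix.rank_transpose_mul_self, Matrix.rank_eq_finrank_span_row]
    have hli : LinearIndependent ℝ (fun k : {k // g k = j} => Wm k) := by
      rw [Fintype.linearIndependent_iff]
      intro c hc
      exact hwLI j c hc
    rw [finrank_span_eq_card (show LinearIndependent ℝ Wm.row from hli), Fintype.card_subtype]
  have htot : ∑ j, (A j).rank = (n + 1) * p := by
    calc ∑ j, (A j).rank = ∑ j, (Finset.univ.filter (fun k => g k = j)).card :=
          Finset.sum_congr rfl fun j _ => hrankA j
      _ = Fintype.card (Fin (n + 1) × Fin p) := by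
          have h1 := Finset.sum_fiberwise (Finset.univ : Finset (Fin (n + 1) × Fin p)) g
            (fun _ => (1 : ℕ))
          calc ∑ j, (Finset.univ.filter (fun k => g k = j)).card
              = ∑ j, ∑ _k ∈ Finset.univ.filter (fun k => g k = j), 1 :=
                Finset.sum_congr rfl fun j _ => Finset.card_eq_sum_ones _
            _ = ∑ _k : Fin (n + 1) × Fin p, 1 := h1
            _ = (Finset.univ : Finset (Fin (n + 1) × Fin p)).card :=
                (Finset.card_eq_sum_ones _).symm
            _ = Fintype.card (Fin (n + 1) × Fin p) := Finset.card_univ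
      _ = (n + 1) * p := by simp [Fintype.card_prod]
  have hSdec' : ∀ i ≤ 2 * n, S i = ∑ j, x j ^ i • A j := by
    intro D hD
    ext a b
    have h1 : ∀ j, (x j ^ D • A j) a b
        = ∑ k ∈ Finset.univ.filter (fun k => g k = j), ξ k ^ D * (w k a * w k b) := by
      intro j
      simp only [hAdef, Matrix.smul_apply, Matrix.sum_apply, smul_eq_mul, vecMulVec_apply]
      rw [Finset.mul_sum]
      refine Finset.sum_congr rfl fun k hk => ?_
      have hxk : ξ k = x j := (hfib k j).mpr (Finset.mem_filter.mp hk).2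
      rw [hxk]
    rw [Matrix.sum_apply, Finset.sum_congr rfl fun j _ => h1 j, Finset.sum_fiberwise]
    exact hSdec D hD a b
  have hAne : ∀ j, A j ≠ 0 := by
    intro j h0
    have h1 := hrankA j
    rw [h0, Matrix.rank_zero] at h1
    have := hfibcard j
    omega
  refine ⟨ℓ, x, A, ⟨hxinj, fun j => ⟨hAne j, hApsd j⟩, hSdec', htot⟩, ?_⟩
  by_cases hex : ∃ j, x j = t
  · obtain ⟨j, hj⟩ := hex
    left
    refine ⟨j, hj, ?_⟩
    rw [hrankA j, ← hcnt]
    congr 1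
    apply Finset.filter_congr
    intro k _
    rw [← hj]
    exact ((hfib k j).symm : (g k = j) ↔ (ξ k = x j))
  · right
    refine ⟨fun j h => hex ⟨j, h⟩, ?_⟩
    by_contra hm0
    have h1 : 0 < (Finset.univ.filter (fun k => ξ k = t)).card := by rw [hcnt]; omega
    rw [Finset.card_pos] at h1
    obtain ⟨k, hk⟩ := h1
    have hkt : ξ k = t := (Finset.mem_filter.mp hk).2
    have h2 : t ∈ img := by
      rw [himg, ← hkt]
      exact Finset.mem_image_of_mem _ (Finset.mem_univ k)
    obtain ⟨j, hj⟩ := hsurj t h2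
    exact hex ⟨j, hj⟩
end

section
/- Let p, n ≥ 1 and let S = (S_0, …, S_{2n}) be a truncated matrix moment sequence whose moment matrix M(n) is positive definite, and fix t ∈ ℝ. Then there exists a minimal representing measure for S (pairwise distinct x_1,…,x_ℓ ∈ ℝ and nonzero PSD symmetric p×p matrices A_1,…,A_ℓ with S_i = Σ_j x_j^i A_j for 0 ≤ i ≤ 2n and Σ_j rank A_j = (n+1)p) whose multiplicity at t is 0, i.e., such that t ∉ {x_1,…,x_ℓ}. -/
open Matrix

namespace GQAux

variable {p : ℕ}

lemma vecMul_smulM {m o : Type*} [Fintype m] (v : m → ℝ) (t : ℝ) (M : Matrix m o ℝ) :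
    v ᵥ* (t • M) = t • (v ᵥ* M) := by
  funext j
  simp only [vecMul, dotProduct, Matrix.smul_apply, Pi.smul_apply, smul_eq_mul, Finset.mul_sum]
  apply Finset.sum_congr rfl
  intros; ring

lemma smulv_vecMul {m o : Type*} [Fintype m] (v : m → ℝ) (t : ℝ) (M : Matrix m o ℝ) :
    (t • v) ᵥ* M = t • (v ᵥ* M) := by
  funext j
  simp only [vecMul, dotProduct, Pi.smul_apply, smul_eq_mul, Finset.mul_sum]
  apply Finset.sum_congr rfl
  intros; ring

/-- The shifted block Hankel matrix with free bottom-right corner `C`. -/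
def W (n : ℕ) (S : ℕ → Matrix (Fin p) (Fin p) ℝ) (C : Matrix (Fin p) (Fin p) ℝ) :
    Matrix (Fin (n + 1) × Fin p) (Fin (n + 1) × Fin p) ℝ :=
  Matrix.of fun i j =>
    if i.1.1 = n ∧ j.1.1 = n then C i.2 j.2 else S (i.1.1 + j.1.1 + 1) i.2 j.2

/-- The pencil `W(C) - t M`. -/
def G (n : ℕ) (S : ℕ → Matrix (Fin p) (Fin p) ℝ) (t : ℝ) (C : Matrix (Fin p) (Fin p) ℝ) :
    Matrix (Fin (n + 1) × Fin p) (Fin (n + 1) × Fin p) ℝ :=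
  W n S C - t • momentMatrix p n S

lemma G_symm {n : ℕ} {S : ℕ → Matrix (Fin p) (Fin p) ℝ} {t : ℝ} {C : Matrix (Fin p) (Fin p) ℝ}
    (hSsym : ∀ i ≤ 2 * n, (S i).IsSymm) (hC : Cᵀ = C) :
    (G n S t C)ᵀ = G n S t C := by
  have hS : ∀ k, k ≤ 2 * n → ∀ a b, S k a b = S k b a := fun k hk a b =>
    congrFun (congrFun (hSsym k hk) b) a
  ext i j
  have hi : i.1.1 ≤ n := Nat.lt_succ_iff.mp i.1.isLt
  have hj : j.1.1 ≤ n := Nat.lt_succ_iff.mp j.1.isLt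
  simp only [G, W, momentMatrix, transpose_apply, Matrix.sub_apply, Matrix.smul_apply, of_apply, smul_eq_mul]
  by_cases h : i.1.1 = n ∧ j.1.1 = n
  · have h' : j.1.1 = n ∧ i.1.1 = n := ⟨h.2, h.1⟩
    rw [if_pos h, if_pos h']
    have hC' : C j.2 i.2 = C i.2 j.2 := congrFun (congrFun hC.symm j.2) i.2
    rw [hC', Nat.add_comm j.1.1 i.1.1, hS (i.1.1 + j.1.1) (by omega) j.2 i.2]
  · have h' : ¬(j.1.1 = n ∧ i.1.1 = n) := fun hc => h ⟨hc.2, hc.1⟩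
    rw [if_neg h, if_neg h', Nat.add_comm j.1.1 i.1.1,
      hS (i.1.1 + j.1.1 + 1) (by omega) j.2 i.2,
      hS (i.1.1 + j.1.1) (by omega) j.2 i.2]

/-- A vector in the (left) kernel of `G S t C` vanishing on the last block vanishes. -/
lemma ker_support {n : ℕ} {S : ℕ → Matrix (Fin p) (Fin p) ℝ} {t : ℝ}
    (hM : (momentMatrix p n S).PosDef) (C : Matrix (Fin p) (Fin p) ℝ)
    (v : Fin (n + 1) × Fin p → ℝ)
    (hv : v ᵥ* (G n S t C) = 0) (hlast : ∀ r, v (Fin.last n, r) = 0) : v = 0 := by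
  classical
  set σv : Fin (n + 1) × Fin p → ℝ :=
    fun j => Fin.cases 0 (fun a => v (a.castSucc, j.2)) j.1 with hσv
  have key : (σv - t • v) ᵥ* momentMatrix p n S = 0 := by
    have hWM : σv ᵥ* momentMatrix p n S = v ᵥ* W n S C := by
      funext j
      simp only [vecMul, dotProduct]
      rw [Fintype.sum_prod_type, Fintype.sum_prod_type]
      rw [Fin.sum_univ_succ, Fin.sum_univ_castSucc]
      have hz0 : ∑ r : Fin p, σv (0, r) * momentMatrix p n S (0, r) j = 0 := by
        apply Finset.sum_eq_zero
        intro r _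
        have : σv (0, r) = 0 := rfl
        rw [this, zero_mul]
      have hzl : ∑ r : Fin p, v (Fin.last n, r) * W n S C (Fin.last n, r) j = 0 := by
        apply Finset.sum_eq_zero
        intro r _
        rw [hlast r, zero_mul]
      rw [hz0, hzl, zero_add, add_zero]
      apply Finset.sum_congr rfl
      intro a _
      apply Finset.sum_congr rfl
      intro r _
      have h1 : σv (a.succ, r) = v (a.castSucc, r) := rfl
      have h2 : W n S C (a.castSucc, r) j = S (a.1 + j.1.1 + 1) r j.2 := by
        have hcc : ¬((a : ℕ) = n ∧ j.1.1 = n) := by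
          intro hc
          exact absurd hc.1 (Nat.ne_of_lt a.isLt)
        simp only [W, of_apply, Fin.coe_castSucc, if_neg hcc]
      have h3 : momentMatrix p n S (a.succ, r) j = S (a.1 + 1 + j.1.1) r j.2 := rfl
      rw [h1, h2, h3, show a.1 + 1 + j.1.1 = a.1 + j.1.1 + 1 from by omega]
    have hGv : v ᵥ* W n S C = t • (v ᵥ* momentMatrix p n S) := by
      have h0 : v ᵥ* (W n S C - t • momentMatrix p n S) = 0 := hv
      rw [Matrix.vecMul_sub, sub_eq_zero] at h0
      rw [h0, vecMul_smulM]
    rw [Matrix.sub_vecMul, hWM, hGv, smulv_vecMul, sub_self]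
  have hdet : (momentMatrix p n S).det ≠ 0 := ne_of_gt hM.det_pos
  have hστ : σv = t • v := sub_eq_zero.mp (Matrix.eq_zero_of_vecMul_eq_zero hdet key)
  have main : ∀ k : ℕ, k ≤ n → ∀ r, v (⟨n - k, by omega⟩, r) = 0 := by
    intro k
    induction k with
    | zero =>
      intro _ r
      have he : (⟨n - 0, by omega⟩ : Fin (n + 1)) = Fin.last n := by
        apply Fin.ext; simp
      rw [he]; exact hlast r
    | succ k ih =>
      intro hk r
      have hk' : k ≤ n := by omega
      have hsucc : (⟨n - k, by omega⟩ : Fin (n + 1)) =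
          Fin.succ ⟨n - (k + 1), by omega⟩ := by
        apply Fin.ext
        simp [Fin.succ]
        omega
      have h1 : σv (⟨n - k, by omega⟩, r) = v (Fin.castSucc ⟨n - (k+1), by omega⟩, r) := by
        rw [hσv]
        simp only []
        rw [hsucc, Fin.cases_succ]
      have h2 : σv (⟨n - k, by omega⟩, r) = t * v (⟨n - k, by omega⟩, r) := by
        rw [hστ]; rfl
      have h3 : v (⟨n - k, by omega⟩, r) = 0 := ih hk' r
      have h4 : v (Fin.castSucc ⟨n - (k+1), by omega⟩, r) = 0 := by
        rw [← h1, h2, h3, mul_zero]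
      have he : (Fin.castSucc ⟨n - (k+1), by omega⟩ : Fin (n+1)) = ⟨n - (k+1), by omega⟩ := by
        apply Fin.ext; rfl
      rwa [he] at h4
  funext i
  obtain ⟨a, r⟩ := i
  have ha : a = ⟨n - (n - a.1), by omega⟩ := by
    apply Fin.ext
    have : a.1 ≤ n := Nat.lt_succ_iff.mp a.isLt
    simp; omega
  rw [ha]
  exact main (n - a.1) (by omega) r

end GQAux

namespace GQAux

variable {p : ℕ}

lemma det_ne_of_ker_bot {m : Type*} [Fintype m] [DecidableEq m] {A : Matrix m m ℝ}
    (h : LinearMap.ker A.mulVecLin = ⊥) : A.det ≠ 0 := by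
  intro hdet
  obtain ⟨v, hv0, hv⟩ := Matrix.exists_mulVec_eq_zero_iff.mpr hdet
  apply hv0
  have hm : v ∈ LinearMap.ker A.mulVecLin := by
    simp [LinearMap.mem_ker, Matrix.mulVecLin_apply, hv]
  rw [h] at hm
  simpa using hm

lemma exists_det_ne {n : ℕ} {S : ℕ → Matrix (Fin p) (Fin p) ℝ} {t : ℝ}
    (hSsym : ∀ i ≤ 2 * n, (S i).IsSymm) (hM : (momentMatrix p n S).PosDef) :
    ∃ C : Matrix (Fin p) (Fin p) ℝ, Cᵀ = C ∧ (G n S t C).det ≠ 0 := by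
  classical
  suffices key : ∀ d : ℕ, ∀ C : Matrix (Fin p) (Fin p) ℝ, Cᵀ = C →
      Module.finrank ℝ (LinearMap.ker (G n S t C).mulVecLin) ≤ d →
      ∃ C', C'ᵀ = C' ∧ (G n S t C').det ≠ 0 by
    exact key (Module.finrank ℝ (LinearMap.ker (G n S t 0).mulVecLin)) 0 (by simp) le_rfl
  intro d
  induction d with
  | zero =>
    intro C hC hrk
    exact ⟨C, hC, det_ne_of_ker_bot (Submodule.finrank_eq_zero.mp (Nat.le_zero.mp hrk))⟩
  | succ d ih =>
    intro C hC hrk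
    by_cases hbot : LinearMap.ker (G n S t C).mulVecLin = ⊥
    · exact ⟨C, hC, det_ne_of_ker_bot hbot⟩
    obtain ⟨v, hvmem, hv0⟩ := Submodule.ne_bot_iff _ |>.mp hbot
    have hGv : (G n S t C) *ᵥ v = 0 := by
      simpa [Matrix.mulVecLin_apply] using (LinearMap.mem_ker.mp hvmem)
    have hvG : v ᵥ* (G n S t C) = 0 := by
      have h := Matrix.mulVec_transpose (G n S t C) v
      rw [G_symm hSsym hC] at h
      rw [← h, hGv]
    set w : Fin p → ℝ := fun r => v (Fin.last n, r) with hw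
    have hwne : w ≠ 0 := by
      intro hw0
      exact hv0 (ker_support hM C v hvG (fun r => congrFun hw0 r))
    set z : Fin (n + 1) × Fin p → ℝ := fun j => if j.1 = Fin.last n then w j.2 else 0 with hzdef
    set Z : Matrix (Fin (n + 1) × Fin p) (Fin (n + 1) × Fin p) ℝ :=
      Matrix.of fun i j => z i * z j with hZ
    set C' := C + Matrix.of (fun r s => w r * w s) with hC'def
    have hC'sym : C'ᵀ = C' := by
      rw [hC'def, transpose_add, hC]
      congr 1
      ext r s
      simp only [transpose_apply, of_apply]
      ring
    have hGC' : G n S t C' = G n S t C + Z := by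
      ext i j
      simp only [G, W, Matrix.sub_apply, Matrix.add_apply, of_apply, hZ]
      by_cases h : i.1.1 = n ∧ j.1.1 = n
      · have hi : i.1 = Fin.last n := Fin.ext h.1
        have hj : j.1 = Fin.last n := Fin.ext h.2
        rw [if_pos h, if_pos h, hzdef]
        simp only [hi, hj, if_true, ite_true]
        rw [hC'def]
        simp only [Matrix.add_apply, of_apply]
        ring
      · rw [if_neg h, if_neg h, hzdef]
        have hz0 : (if i.1 = Fin.last n then w i.2 else 0) *
            (if j.1 = Fin.last n then w j.2 else 0) = 0 := by
          by_cases hi : i.1 = Fin.last n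
          · have hj : ¬ j.1 = Fin.last n := by
              intro hj
              exact h ⟨by rw [hi]; rfl, by rw [hj]; rfl⟩
            rw [if_neg hj, mul_zero]
          · rw [if_neg hi, zero_mul]
        rw [hz0]
        ring
    have hzv : z ⬝ᵥ v ≠ 0 := by
      have hcalc : z ⬝ᵥ v = ∑ r, w r * w r := by
        simp only [dotProduct, hzdef]
        rw [Fintype.sum_prod_type]
        rw [Finset.sum_eq_single (Fin.last n)]
        · exact Finset.sum_congr rfl fun r _ => by rw [if_pos rfl]
        · intro a _ hne
          exact Finset.sum_eq_zero fun r _ => by rw [if_neg hne, zero_mul]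
        · intro h; exact absurd (Finset.mem_univ _) h
      rw [hcalc]
      intro h0
      apply hwne
      funext r
      have := (Finset.sum_eq_zero_iff_of_nonneg
        (fun r _ => mul_self_nonneg (w r))).mp h0 r (Finset.mem_univ r)
      exact mul_self_eq_zero.mp this
    have hZu : ∀ u, Z *ᵥ u = (z ⬝ᵥ u) • z := by
      intro u
      funext i
      simp only [hZ, mulVec, dotProduct, of_apply, Pi.smul_apply, smul_eq_mul, mul_assoc]
      rw [← Finset.mul_sum]
      ring
    have hker_le : LinearMap.ker (G n S t C').mulVecLin ≤
        LinearMap.ker (G n S t C).mulVecLin := by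
      intro u hu
      have hu0 : (G n S t C') *ᵥ u = 0 := by
        simpa [Matrix.mulVecLin_apply] using (LinearMap.mem_ker.mp hu)
      have hu' : (G n S t C) *ᵥ u + (z ⬝ᵥ u) • z = 0 := by
        rw [hGC', Matrix.add_mulVec, hZu u] at hu0
        exact hu0
      have hzu : z ⬝ᵥ u = 0 := by
        have h1 : v ⬝ᵥ ((G n S t C) *ᵥ u + (z ⬝ᵥ u) • z) = 0 := by rw [hu', dotProduct_zero]
        rw [dotProduct_add, Matrix.dotProduct_mulVec, hvG, zero_dotProduct,
          zero_add, dotProduct_smul, smul_eq_mul] at h1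
        rcases mul_eq_zero.mp h1 with h | h
        · exact h
        · rw [dotProduct_comm] at h
          exact absurd h hzv
      rw [LinearMap.mem_ker, Matrix.mulVecLin_apply]
      rw [hzu, zero_smul, add_zero] at hu'
      exact hu'
    have hvnotin : v ∉ LinearMap.ker (G n S t C').mulVecLin := by
      intro hmem
      have h0 : (G n S t C') *ᵥ v = 0 := by
        simpa [Matrix.mulVecLin_apply] using (LinearMap.mem_ker.mp hmem)
      rw [hGC', Matrix.add_mulVec, hZu v, hGv, zero_add] at h0
      have hzne : z ≠ 0 := by
        obtain ⟨r, hr⟩ := Function.ne_iff.mp hwne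
        intro hz0
        apply hr
        have := congrFun hz0 (Fin.last n, r)
        simpa [hzdef] using this
      exact hzne (by simpa [smul_eq_zero, hzv] using h0)
    have hstrict : LinearMap.ker (G n S t C').mulVecLin <
        LinearMap.ker (G n S t C).mulVecLin :=
      lt_of_le_of_ne hker_le (fun heq => hvnotin (heq ▸ hvmem))
    have hlt := Submodule.finrank_lt_finrank_of_lt hstrict
    exact ih C' hC'sym (by omega)

end GQAux

namespace GQAux

variable {p : ℕ}

lemma realCT {α β : Type*} (A : Matrix α β ℝ) : Aᴴ = Aᵀ := by
  ext i j; simp [conjTranspose_apply]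

/-- block-column selector -/
def E (p n : ℕ) (b : Fin (n + 1)) : Matrix (Fin (n + 1) × Fin p) (Fin p) ℝ :=
  Matrix.of fun i c => if i = (b, c) then 1 else 0

lemma mul_E {n : ℕ} {α : Type*} (A : Matrix α (Fin (n + 1) × Fin p) ℝ) (b : Fin (n + 1))
    (x : α) (c : Fin p) : (A * E p n b) x c = A x (b, c) := by
  classical
  simp only [mul_apply, E, of_apply, mul_ite, mul_one, mul_zero]
  rw [Finset.sum_ite_eq' Finset.univ (b, c) (fun j => A x j)]
  simp

lemma Et_mul {n : ℕ} {α : Type*} [Fintype α] (A : Matrix (Fin (n + 1) × Fin p) α ℝ)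
    (b : Fin (n + 1)) (r : Fin p) (c : α) : ((E p n b)ᵀ * A) r c = A (b, r) c := by
  classical
  simp only [mul_apply, transpose_apply, E, of_apply, ite_mul, one_mul, zero_mul]
  rw [Finset.sum_ite_eq' Finset.univ (b, r) (fun j => A j c)]
  simp

lemma rank_eq_card_of_rows_li {α : Type*} [Fintype α] [DecidableEq α]
    (B : Matrix α (Fin p) ℝ) (h : ∀ lam : α → ℝ, Bᵀ *ᵥ lam = 0 → lam = 0) :
    B.rank = Fintype.card α := by
  rw [← Matrix.rank_transpose]
  have hker : LinearMap.ker (Bᵀ).mulVecLin = ⊥ := by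
    rw [Submodule.eq_bot_iff]
    intro lam hl
    apply h lam
    have : (Bᵀ).mulVecLin lam = 0 := hl
    rwa [Matrix.mulVecLin_apply] at this
  have hrn := LinearMap.finrank_range_add_finrank_ker (Bᵀ).mulVecLin
  rw [hker, finrank_bot, add_zero] at hrn
  rw [Matrix.rank, hrn]
  simp [Module.finrank_pi]

open scoped MatrixOrder in
lemma exists_sqrt {m : Type*} [Fintype m] [DecidableEq m] {M : Matrix m m ℝ}
    (h : M.PosSemidef) : ∃ R : Matrix m m ℝ, R * R = M ∧ R.IsHermitian :=
  ⟨CFC.sqrt M, CFC.sqrt_mul_sqrt_self M h.nonneg,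
    (Matrix.nonneg_iff_posSemidef.mp (CFC.sqrt_nonneg M)).isHermitian⟩

end GQAux

open GQAux

/-- Corollary 1.2 (atom avoidance): there is always a minimal representing measure
avoiding any prescribed point `t`. -/
theorem gaussian_quadrature_atom_avoidance (p n : ℕ) (hp : 1 ≤ p) (hn : 1 ≤ n)
    (S : ℕ → Matrix (Fin p) (Fin p) ℝ)
    (hSsym : ∀ i ≤ 2 * n, (S i).IsSymm)
    (hM : (momentMatrix p n S).PosDef)
    (t : ℝ) :
    ∃ (ℓ : ℕ) (x : Fin ℓ → ℝ) (A : Fin ℓ → Matrix (Fin p) (Fin p) ℝ),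
      IsMinimalRepMeasure p n ℓ S x A ∧ ∀ j, x j ≠ t := by
  classical
  set M := momentMatrix p n S with hMdef
  obtain ⟨C, hCsym, hdetG⟩ := GQAux.exists_det_ne (t := t) hSsym hM
  set Wc := GQAux.W n S C with hWcdef
  have hGdef : GQAux.G n S t C = Wc - t • M := rfl
  have hMpsd := hM.posSemidef
  obtain ⟨R, hRR, hRherm⟩ := GQAux.exists_sqrt hMpsd
  have hRsym : Rᵀ = R := by
    rw [← realCT]; exact hRherm
  have hMsym : Mᵀ = M := by rw [← realCT]; exact hM.1
  have hdetR : R.det ≠ 0 := by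
    have hdd : R.det * R.det = M.det := by rw [← det_mul, hRR]
    intro h0
    rw [h0, mul_zero] at hdd
    exact (ne_of_gt hM.det_pos) hdd.symm
  have hdetRu : IsUnit R.det := isUnit_iff_ne_zero.mpr hdetR
  set H := R⁻¹ * (Wc * R⁻¹) with hHdef
  have hWcsym : Wcᵀ = Wc := by
    have hG := GQAux.G_symm (t := t) hSsym hCsym
    rw [hGdef, transpose_sub, transpose_smul, hMsym, sub_left_injective.eq_iff] at hG
    exact hG
  have hRisym : R⁻¹ᵀ = R⁻¹ := by rw [transpose_nonsing_inv, hRsym]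
  have hHsym : Hᵀ = H := by
    rw [hHdef, transpose_mul, transpose_mul, hRisym, hWcsym, Matrix.mul_assoc]
  have hHherm : H.IsHermitian := by
    show Hᴴ = H
    rw [realCT]; exact hHsym
  -- shift relations
  have key2 : ∀ b : Fin n, Wc * E p n b.castSucc = M * E p n b.succ := by
    intro b
    ext i c
    rw [mul_E, mul_E]
    have hb : ¬(i.1.1 = n ∧ ((b.castSucc : Fin (n + 1)) : ℕ) = n) := by
      intro hc
      exact absurd (by simpa using hc.2) (Nat.ne_of_lt b.isLt)
    simp only [hWcdef, GQAux.W, of_apply, if_neg hb, hMdef, momentMatrix]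
    rw [show i.1.1 + ((b.castSucc : Fin (n+1)) : ℕ) + 1 = i.1.1 + ((b.succ : Fin (n+1)) : ℕ)
      from by simp [Fin.val_succ]; omega]
  have key3 : ∀ b : Fin (n + 1), H ^ (b : ℕ) * (R * E p n 0) = R * E p n b := by
    intro b
    induction b using Fin.induction with
    | zero => simp
    | succ b ihb =>
      rw [Fin.coe_castSucc] at ihb
      rw [Fin.val_succ, pow_succ', Matrix.mul_assoc, ihb, hHdef,
        Matrix.mul_assoc R⁻¹ (Wc * R⁻¹) _, Matrix.mul_assoc Wc R⁻¹ _,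
        Matrix.nonsing_inv_mul_cancel_left R _ hdetRu, key2 b, ← hRR,
        Matrix.mul_assoc R R _, Matrix.nonsing_inv_mul_cancel_left R _ hdetRu]
  
  have key3T : ∀ b : Fin (n + 1), (E p n b)ᵀ * R = (E p n 0)ᵀ * (R * H ^ (b : ℕ)) := by
    intro b
    have h := congrArg Matrix.transpose (key3 b)
    rw [transpose_mul, transpose_mul, transpose_mul, transpose_pow, hHsym, hRsym] at h
    rw [← Matrix.mul_assoc]
    exact h.symm
  have key5 : ∀ i : ℕ, i ≤ 2 * n →
      S i = (E p n 0)ᵀ * (R * (H ^ i * (R * E p n 0))) := by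
    intro i hi
    set a : ℕ := min i n with ha
    set b : ℕ := i - a with hb
    have hab : a + b = i := by omega
    have hbn : b ≤ n := by omega
    set af : Fin (n + 1) := ⟨a, by omega⟩ with haf
    set bf : Fin (n + 1) := ⟨b, by omega⟩ with hbf
    have h3b := key3 bf
    have h3aT := key3T af
    have hsplit : H ^ i = H ^ a * H ^ b := by rw [← pow_add, hab]
    rw [hsplit, Matrix.mul_assoc (H ^ a) _ _]
    have hbv : (bf : ℕ) = b := rfl
    rw [hbv] at h3b
    rw [h3b]
    have hav : (af : ℕ) = a := rfl
    rw [hav] at h3aT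
    have hgoal : (E p n 0)ᵀ * (R * (H ^ a * (R * E p n bf)))
        = ((E p n 0)ᵀ * (R * H ^ a)) * (R * E p n bf) := by
      simp only [Matrix.mul_assoc]
    rw [hgoal, ← h3aT, Matrix.mul_assoc (E p n af)ᵀ R _, ← Matrix.mul_assoc R R _, hRR]
    ext r c
    rw [Et_mul, mul_E]
    show S i r c = S (a + b) r c
    rw [hab]
  -- spectral decomposition
  set U : Matrix (Fin (n + 1) × Fin p) (Fin (n + 1) × Fin p) ℝ :=
    (hHherm.eigenvectorUnitary : Matrix (Fin (n + 1) × Fin p) (Fin (n + 1) × Fin p) ℝ)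
    with hUdef
  set dg : Fin (n + 1) × Fin p → ℝ := hHherm.eigenvalues with hdgdef
  have hUmem := (Matrix.IsHermitian.eigenvectorUnitary hHherm).2
  have hUU : Uᵀ * U = 1 := by
    have h := (Unitary.mem_iff.mp hUmem).1
    rwa [Matrix.star_eq_conjTranspose, realCT] at h
  have hUUT : U * Uᵀ = 1 := by
    have h := (Unitary.mem_iff.mp hUmem).2
    rwa [Matrix.star_eq_conjTranspose, realCT] at h
  have hspec : H = U * (diagonal dg * Uᵀ) := by
    have h := hHherm.spectral_theorem
    rw [Unitary.conjStarAlgAut_apply, Matrix.star_eq_conjTranspose, realCT, RCLike.ofReal_real_eq_id,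
      Function.id_comp, Matrix.mul_assoc] at h
    exact h
  have hpow : ∀ i : ℕ, H ^ i = U * (diagonal (fun k => dg k ^ i) * Uᵀ) := by
    intro i
    induction i with
    | zero =>
      rw [pow_zero]
      have h1 : (fun k => dg k ^ 0) = fun _ => (1 : ℝ) := by funext k; rw [pow_zero]
      rw [h1, Matrix.diagonal_one, Matrix.one_mul, hUUT]
    | succ i ih =>
      rw [pow_succ, ih]
      conv_lhs => rw [hspec]
      rw [Matrix.mul_assoc U _ _, Matrix.mul_assoc (diagonal _) Uᵀ _,
        ← Matrix.mul_assoc Uᵀ U _, hUU, Matrix.one_mul,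
        ← Matrix.mul_assoc (diagonal _) (diagonal _) _, diagonal_mul_diagonal]
      have h2 : (fun k => dg k ^ i * dg k) = fun k => dg k ^ (i + 1) := by
        funext k; rw [pow_succ]
      rw [h2]
  set F : Matrix (Fin (n + 1) × Fin p) (Fin p) ℝ := Uᵀ * (R * E p n 0) with hFdef
  have entry : ∀ i : ℕ, i ≤ 2 * n → ∀ r c,
      S i r c = ∑ k, dg k ^ i * (F k r * F k c) := by
    intro i hi r c
    have h5 := key5 i hi
    rw [hpow i] at h5
    have hrearr : (E p n 0)ᵀ * (R * (U * (diagonal (fun k => dg k ^ i) * Uᵀ) * (R * E p n 0)))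
        = Fᵀ * (diagonal (fun k => dg k ^ i) * F) := by
      simp only [hFdef, transpose_mul, transpose_transpose, hRsym, Matrix.mul_assoc]
    rw [h5, hrearr, mul_apply]
    apply Finset.sum_congr rfl
    intro k _
    rw [transpose_apply, diagonal_mul]
    ring
  -- eigenvalues avoid t
  have hWtM : Wc - t • M = R * ((H - t • 1) * R) := by
    have h1 : H * R = R⁻¹ * Wc := by
      rw [hHdef, Matrix.mul_assoc R⁻¹ (Wc * R⁻¹) R, Matrix.mul_assoc Wc R⁻¹ R,
        Matrix.nonsing_inv_mul R hdetRu, Matrix.mul_one]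
    rw [Matrix.sub_mul, Matrix.mul_sub, h1, Matrix.mul_nonsing_inv_cancel_left R Wc hdetRu,
      Matrix.smul_mul, Matrix.one_mul, mul_smul_comm, hRR]
  have hdetHt : (H - t • 1).det ≠ 0 := by
    intro h0
    apply hdetG
    rw [hGdef, hWtM, det_mul, det_mul, h0, zero_mul, mul_zero]
  have hdt : ∀ k, dg k ≠ t := by
    intro k hk
    apply hdetHt
    have hdiag : H - t • 1 = U * (diagonal (fun m => dg m - t) * Uᵀ) := by
      have hdd : diagonal (fun m => dg m - t) = diagonal dg - diagonal (fun _ => t) := by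
        rw [diagonal_sub]
      rw [hdd, Matrix.sub_mul, Matrix.mul_sub, ← hspec, ← smul_one_eq_diagonal,
        Matrix.smul_mul, Matrix.one_mul, mul_smul_comm, hUUT]
    rw [hdiag, det_mul, det_mul, det_diagonal]
    rw [Finset.prod_eq_zero (Finset.mem_univ k) (by rw [hk]; ring)]
    ring
  
  -- grouping eigenvalues
  set vals : Finset ℝ := Finset.image dg Finset.univ with hvals
  set ℓ : ℕ := vals.card with hℓ
  set e : {y // y ∈ vals} ≃ Fin ℓ := vals.equivFin with he
  set x : Fin ℓ → ℝ := fun j => (e.symm j : ℝ) with hx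
  have hxinj : Function.Injective x := by
    intro a b hab
    exact e.symm.injective (Subtype.ext hab)
  have hxmem : ∀ j, x j ∈ vals := fun j => (e.symm j).2
  have hxt : ∀ j, x j ≠ t := by
    intro j hjt
    obtain ⟨k, _, hk⟩ := Finset.mem_image.mp (hxmem j)
    exact hdt k (by rw [hk, hjt])
  set fiber : Fin ℓ → Finset (Fin (n + 1) × Fin p) :=
    fun j => Finset.univ.filter (fun k => dg k = x j) with hfib
  set Gm : (j : Fin ℓ) → Matrix {m // m ∈ fiber j} (Fin p) ℝ :=
    fun j => Matrix.of (fun k c => F k.1 c) with hGm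
  set A : Fin ℓ → Matrix (Fin p) (Fin p) ℝ := fun j => (Gm j)ᵀ * Gm j with hA
  have hAentry : ∀ j r c, A j r c = ∑ k ∈ fiber j, F k r * F k c := by
    intro j r c
    rw [hA]
    show ((Gm j)ᵀ * Gm j) r c = _
    rw [mul_apply, ← Finset.sum_coe_sort (fiber j) (fun k => F k r * F k c)]
    apply Finset.sum_congr rfl
    intro k _
    rw [hGm]
    show F k.1 r * F k.1 c = _
    rfl
  have hfibsum : ∀ (g : (Fin (n + 1) × Fin p) → ℝ),
      ∑ j, ∑ k ∈ fiber j, g k = ∑ k, g k := by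
    intro g
    have h1 : ∑ j, ∑ k ∈ fiber j, g k
        = ∑ y ∈ vals, ∑ k ∈ Finset.univ.filter (fun k => dg k = y), g k := by
      rw [← Finset.sum_coe_sort vals
        (fun y => ∑ k ∈ Finset.univ.filter (fun k => dg k = y), g k)]
      apply Fintype.sum_equiv e.symm
      intro j
      rw [hfib]
    exact h1.trans (Finset.sum_fiberwise_of_maps_to
      (fun k _ => Finset.mem_image_of_mem dg (Finset.mem_univ k)) g)
  have hfibsumN : ∀ (g : (Fin (n + 1) × Fin p) → ℕ),
      ∑ j, ∑ k ∈ fiber j, g k = ∑ k, g k := by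
    intro g
    have h1 : ∑ j, ∑ k ∈ fiber j, g k
        = ∑ y ∈ vals, ∑ k ∈ Finset.univ.filter (fun k => dg k = y), g k := by
      rw [← Finset.sum_coe_sort vals
        (fun y => ∑ k ∈ Finset.univ.filter (fun k => dg k = y), g k)]
      apply Fintype.sum_equiv e.symm
      intro j
      rw [hfib]
    exact h1.trans (Finset.sum_fiberwise_of_maps_to
      (fun k _ => Finset.mem_image_of_mem dg (Finset.mem_univ k)) g)
  have hSsum : ∀ i ≤ 2 * n, S i = ∑ j, x j ^ i • A j := by
    intro i hi
    ext r c
    rw [entry i hi r c, Matrix.sum_apply]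
    rw [← hfibsum (fun k => dg k ^ i * (F k r * F k c))]
    apply Finset.sum_congr rfl
    intro j _
    rw [Matrix.smul_apply, smul_eq_mul, hAentry j r c, Finset.mul_sum]
    apply Finset.sum_congr rfl
    intro k hk
    rw [hfib] at hk
    have hdk : dg k = x j := (Finset.mem_filter.mp hk).2
    rw [hdk]
  have hrank : ∀ j, (A j).rank = (fiber j).card := by
    intro j
    rw [hA]
    show ((Gm j)ᵀ * Gm j).rank = _
    rw [Matrix.rank_transpose_mul_self]
    rw [GQAux.rank_eq_card_of_rows_li (Gm j) ?_]
    · exact Fintype.card_coe (fiber j)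
    intro lam hlam
    set μ : (Fin (n + 1) × Fin p) → ℝ :=
      fun m => if h : m ∈ fiber j then lam ⟨m, h⟩ else 0 with hμ
    have hμ_eval : ∀ r, ∑ m : Fin (n + 1) × Fin p, μ m * F m r = 0 := by
      intro r
      have hsplit : ∑ m : Fin (n + 1) × Fin p, μ m * F m r
          = ∑ m ∈ fiber j, μ m * F m r := by
        symm
        apply Finset.sum_subset (Finset.subset_univ _)
        intro m _ hm
        rw [hμ]
        show (if h : m ∈ fiber j then lam ⟨m, h⟩ else 0) * F m r = 0
        rw [dif_neg hm, zero_mul]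
      have h0 := congrFun hlam r
      have h0' : ∑ k : {m // m ∈ fiber j}, F k.1 r * lam k = 0 := by
        have : ((Gm j)ᵀ *ᵥ lam) r = ∑ k : {m // m ∈ fiber j}, F k.1 r * lam k := by
          rw [Matrix.mulVec, dotProduct]
          apply Finset.sum_congr rfl
          intro k _
          rw [transpose_apply, hGm]
          rfl
        rw [← this, h0]
        rfl
      rw [hsplit, ← Finset.sum_attach (fiber j) (fun m => μ m * F m r)]
      rw [← h0']
      apply Finset.sum_congr rfl
      intro k _
      rw [hμ]
      show (if h : k.1 ∈ fiber j then lam ⟨k.1, h⟩ else 0) * F k.1 r = F k.1 r * lam k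
      rw [dif_pos k.2]
      ring
    have hμF : μ ᵥ* F = 0 := by
      funext r
      rw [Matrix.vecMul, dotProduct]
      exact hμ_eval r
    set y : (Fin (n + 1) × Fin p) → ℝ := U *ᵥ μ with hy
    have hDμ : diagonal dg *ᵥ μ = x j • μ := by
      funext m
      rw [Matrix.mulVec_diagonal, Pi.smul_apply, smul_eq_mul]
      by_cases hm : m ∈ fiber j
      · have : dg m = x j := by
          rw [hfib] at hm
          exact (Finset.mem_filter.mp hm).2
        rw [this]
      · have hm0 : μ m = 0 := by
          rw [hμ]
          show (if h : m ∈ fiber j then lam ⟨m, h⟩ else 0) = 0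
          rw [dif_neg hm]
        rw [hm0, mul_zero, mul_zero]
    have hHU : H * U = U * diagonal dg := by
      rw [hspec, Matrix.mul_assoc U _ U, Matrix.mul_assoc (diagonal dg) Uᵀ U, hUU,
        Matrix.mul_one]
    have hHy : H *ᵥ y = x j • y := by
      rw [hy, Matrix.mulVec_mulVec, hHU, ← Matrix.mulVec_mulVec, hDμ, Matrix.mulVec_smul]
    have hHpowy : ∀ b : ℕ, H ^ b *ᵥ y = x j ^ b • y := by
      intro b
      induction b with
      | zero => simp
      | succ b ih =>
        rw [pow_succ', ← Matrix.mulVec_mulVec, ih, Matrix.mulVec_smul, hHy, smul_smul,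
          pow_succ, mul_comm]
    have hyRE0 : y ᵥ* (R * E p n 0) = 0 := by
      have hyv : y = μ ᵥ* Uᵀ := by rw [Matrix.vecMul_transpose, hy]
      rw [hyv, Matrix.vecMul_vecMul, ← hFdef, hμF]
    have hyREb : ∀ b : Fin (n + 1), y ᵥ* (R * E p n b) = 0 := by
      intro b
      rw [← key3 b, ← Matrix.vecMul_vecMul]
      have hvm : y ᵥ* H ^ (b : ℕ) = x j ^ (b : ℕ) • y := by
        rw [← Matrix.mulVec_transpose (H ^ (b : ℕ)) y, transpose_pow, hHsym]
        exact hHpowy b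
      rw [hvm, GQAux.smulv_vecMul, hyRE0, smul_zero]
    have hyR : y ᵥ* R = 0 := by
      funext m
      obtain ⟨b, c⟩ := m
      have hc : (y ᵥ* (R * E p n b)) c = (y ᵥ* R) (b, c) := by
        rw [Matrix.vecMul, Matrix.vecMul, dotProduct, dotProduct]
        apply Finset.sum_congr rfl
        intro i _
        rw [mul_E]
      rw [Pi.zero_apply, ← hc, hyREb b]
      rfl
    have hy0 : y = 0 := Matrix.eq_zero_of_vecMul_eq_zero hdetR hyR
    have hμ0 : μ = 0 := by
      have hμy : Uᵀ *ᵥ y = μ := by rw [hy, Matrix.mulVec_mulVec, hUU, Matrix.one_mulVec]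
      rw [← hμy, hy0, Matrix.mulVec_zero]
    funext k
    have hk0 := congrFun hμ0 k.1
    rw [hμ] at hk0
    have : (if h : k.1 ∈ fiber j then lam ⟨k.1, h⟩ else 0) = 0 := hk0
    rw [dif_pos k.2] at this
    exact this
  have hranksum : ∑ j, (A j).rank = (n + 1) * p := by
    have h1 : ∑ j, (A j).rank = ∑ j, (fiber j).card :=
      Finset.sum_congr rfl (fun j _ => hrank j)
    have h2 : ∑ j : Fin ℓ, (fiber j).card = Fintype.card (Fin (n + 1) × Fin p) := by
      have h3 : ∀ j : Fin ℓ, (fiber j).card = ∑ k ∈ fiber j, 1 := by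
        intro j
        rw [Finset.card_eq_sum_ones]
      rw [Finset.sum_congr rfl (fun j _ => h3 j), hfibsumN (fun _ => 1)]
      simp [Finset.card_univ]
    rw [h1, h2]
    simp
  refine ⟨ℓ, x, A, ⟨hxinj, ?_, hSsum, hranksum⟩, hxt⟩
  intro j
  constructor
  · intro h0
    have h1 : (A j).rank = 0 := by rw [h0, Matrix.rank_zero]
    have h2 : (fiber j).card ≠ 0 := by
      obtain ⟨k, _, hk⟩ := Finset.mem_image.mp (hxmem j)
      have hkf : k ∈ fiber j := by
        rw [hfib]
        exact Finset.mem_filter.mpr ⟨Finset.mem_univ k, hk⟩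
      exact Finset.card_ne_zero_of_mem hkf
    exact h2 (by rw [← hrank j, h1])
  · rw [hA]
    show ((Gm j)ᵀ * Gm j).PosSemidef
    rw [← GQAux.realCT (Gm j)]
    exact Matrix.posSemidef_conjTranspose_mul_self (Gm j)
end

section
/- Let n_1, n_2, p ≥ 1 and let S_k be real symmetric p×p matrices for k = −2n_1, −2n_1+1, …, 2n_2. Assume the block Hankel matrix (S_{i+j−2−2n_1})_{i,j=1}^{n_1+n_2+1}, of size (n_1+n_2+1)p, is positive definite. Then there exist ℓ ≥ 1, pairwise distinct nonzero real numbers x_1, …, x_ℓ and positive semidefinite real symmetric p×p matrices B_1, …, B_ℓ such that S_k = Σ_{j=1}^ℓ x_j^k B_j for every integer k with −2n_1 ≤ k ≤ 2n_2 (where x_j^k denotes the k-th integer power of the nonzero real x_j). -/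
open Matrix

set_option maxHeartbeats 1600000

/-- The block Hankel moment matrix of a two-sided sequence `S : ℤ → M_p(ℝ)` relative to
`n₁, n₂`: its `(i,j)`-th `p × p` block is `S (i + j - 2n₁)` for `0 ≤ i, j ≤ n₁ + n₂`. -/
def strongMomentMatrix (p n₁ n₂ : ℕ) (S : ℤ → Matrix (Fin p) (Fin p) ℝ) :
    Matrix (Fin (n₁ + n₂ + 1) × Fin p) (Fin (n₁ + n₂ + 1) × Fin p) ℝ :=
  fun i j => S ((i.1.1 : ℤ) + (j.1.1 : ℤ) - 2 * (n₁ : ℤ)) i.2 j.2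


/-- For any Hermitian real matrix `X`, `t • 1 - X` is positive definite for large `t`. -/
lemma exists_smul_one_sub_posDef {m : Type*} [Fintype m] [DecidableEq m]
    (X : Matrix m m ℝ) (hX : X.IsHermitian) :
    ∃ t : ℝ, ((t • (1 : Matrix m m ℝ)) - X).PosDef := by
  refine ⟨(∑ i, ∑ j, |X i j|) + 1, posDef_iff_dotProduct_mulVec.mpr ⟨?_, ?_⟩⟩
  · have : ((((∑ i, ∑ j, |X i j|) + 1) • (1 : Matrix m m ℝ)) - X).conjTranspose
        = (((∑ i, ∑ j, |X i j|) + 1) • (1 : Matrix m m ℝ)) - X := by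
      rw [conjTranspose_sub, conjTranspose_smul, conjTranspose_one, hX.eq, star_trivial]
    exact this
  · intro x hx
    have hS : 0 < ∑ i, x i * x i := by
      have h1 : ∀ i, 0 ≤ x i * x i := fun i => mul_self_nonneg _
      obtain ⟨i, hi⟩ := Function.ne_iff.mp hx
      exact Finset.sum_pos' (fun i _ => h1 i)
        ⟨i, Finset.mem_univ i, mul_self_pos.mpr hi⟩
    have hdot : star x ⬝ᵥ ((((∑ i, ∑ j, |X i j|) + 1) • (1 : Matrix m m ℝ)) - X) *ᵥ x
        = ((∑ i, ∑ j, |X i j|) + 1) * (∑ i, x i * x i) - ∑ i, ∑ j, x i * X i j * x j := by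
      rw [sub_mulVec, smul_mulVec, one_mulVec, dotProduct_sub, dotProduct_smul,
        star_trivial]
      congr 1
      refine Finset.sum_congr rfl fun i _ => ?_
      simp only [Matrix.mulVec, dotProduct, Finset.mul_sum]
      exact Finset.sum_congr rfl fun j _ => by ring
    rw [hdot]
    have hbound : ∑ i, ∑ j, x i * X i j * x j ≤ (∑ i, ∑ j, |X i j|) * (∑ i, x i * x i) := by
      rw [Finset.sum_mul]
      refine Finset.sum_le_sum fun i _ => ?_
      rw [Finset.sum_mul]
      refine Finset.sum_le_sum fun j _ => ?_
      have h1 : x i * X i j * x j ≤ |X i j| * (|x i| * |x j|) := by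
        calc x i * X i j * x j ≤ |x i * X i j * x j| := le_abs_self _
        _ = |X i j| * (|x i| * |x j|) := by rw [abs_mul, abs_mul]; ring
      refine h1.trans ?_
      have h2 : |x i| * |x j| ≤ ∑ k, x k * x k := by
        rcases le_total (|x i|) (|x j|) with h | h
        · have : |x i| * |x j| ≤ |x j| * |x j| := by
            apply mul_le_mul_of_nonneg_right h (abs_nonneg _)
          refine this.trans ?_
          rw [← abs_mul, abs_mul_self]
          exact Finset.single_le_sum (f := fun k => x k * x k)
            (fun k _ => mul_self_nonneg _) (Finset.mem_univ j)
        · have : |x i| * |x j| ≤ |x i| * |x i| :=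
            mul_le_mul_of_nonneg_left h (abs_nonneg _)
          refine this.trans ?_
          rw [← abs_mul, abs_mul_self]
          exact Finset.single_le_sum (f := fun k => x k * x k)
            (fun k _ => mul_self_nonneg _) (Finset.mem_univ i)
      exact mul_le_mul_of_nonneg_left h2 (abs_nonneg _)
    nlinarith [hbound, hS]

/-- Positive definiteness from a positive definite `2,2` block and Schur complement. -/
lemma posDef_fromBlocks₂₂' {m n : Type*} [Fintype m] [Fintype n] [DecidableEq m] [DecidableEq n]
    {A : Matrix m m ℝ} {B : Matrix m n ℝ} {D : Matrix n n ℝ}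
    (hD : D.PosDef) (hSchur : (A - B * D⁻¹ * Bᴴ).PosDef) :
    (fromBlocks A B Bᴴ D).PosDef := by
  haveI := hD.isUnit.invertible
  have hHerm : (fromBlocks A B Bᴴ D).IsHermitian :=
    (Matrix.IsHermitian.fromBlocks₂₂ _ _ hD.1).mpr hSchur.1
  refine posDef_iff_dotProduct_mulVec.mpr ⟨hHerm, fun x hx => ?_⟩
  have hxe : x = (x ∘ Sum.inl) ⊕ᵥ (x ∘ Sum.inr) := (Sum.elim_comp_inl_inr x).symm
  rw [hxe, dotProduct_mulVec, schur_complement_eq₂₂ A B _ _ hD.1]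
  by_cases h1 : x ∘ Sum.inl = 0
  · have h2 : x ∘ Sum.inr ≠ 0 := by
      intro h2
      apply hx
      funext i
      cases i with
      | inl a => exact congrFun h1 a
      | inr a => exact congrFun h2 a
    have hz : ((D⁻¹ * Bᴴ) *ᵥ (x ∘ Sum.inl) + x ∘ Sum.inr) = x ∘ Sum.inr := by
      rw [h1]; simp
    rw [hz, h1]
    have := hD.dotProduct_mulVec_pos h2
    rw [dotProduct_mulVec] at this
    simpa using this
  · have hpos := hSchur.dotProduct_mulVec_pos h1
    rw [dotProduct_mulVec] at hpos
    have hnn : (0:ℝ) ≤ star ((D⁻¹ * Bᴴ) *ᵥ (x ∘ Sum.inl) + x ∘ Sum.inr) ᵥ* D ⬝ᵥ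
        ((D⁻¹ * Bᴴ) *ᵥ (x ∘ Sum.inl) + x ∘ Sum.inr) := by
      rw [← dotProduct_mulVec]
      exact hD.posSemidef.dotProduct_mulVec_nonneg _
    linarith

/-- Positive definiteness is preserved by reindexing along an equivalence. -/
lemma posDef_submatrix_equiv {m n : Type*} [Fintype m] [Fintype n] [DecidableEq m] [DecidableEq n]
    {M : Matrix n n ℝ} (hM : M.PosDef) (e : m ≃ n) : (M.submatrix e e).PosDef := by
  refine posDef_iff_dotProduct_mulVec.mpr ⟨(isHermitian_submatrix_equiv e).mpr hM.1, fun x hx => ?_⟩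
  have h0 : (x ∘ e.symm) ≠ 0 := by
    intro h
    apply hx
    funext i
    simpa using congrFun h (e i)
  have := hM.dotProduct_mulVec_pos h0
  have hrw : star x ⬝ᵥ (M.submatrix e e) *ᵥ x
      = star (x ∘ e.symm) ⬝ᵥ M *ᵥ (x ∘ e.symm) := by
    rw [submatrix_mulVec_equiv]
    refine Fintype.sum_equiv e _ _ fun i => by simp
  rw [hrw]
  exact this



section Quadrature

variable {q n : ℕ}

open scoped MatrixOrder in
/-- Matrix Gaussian quadrature from the pencil of two block Hankel matrices. -/
lemma hankel_pencil_quadrature (U : ℕ → Matrix (Fin q) (Fin q) ℝ)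
    (A B : Matrix (Fin (n+1) × Fin q) (Fin (n+1) × Fin q) ℝ)
    (hAdef : ∀ i j : Fin (n+1) × Fin q, A i j = U (i.1.1 + j.1.1) i.2 j.2)
    (hBdef : ∀ i j : Fin (n+1) × Fin q, B i j = U (i.1.1 + j.1.1 + 1) i.2 j.2)
    (hA : A.PosDef) (hB : B.IsHermitian) :
    ∃ (d : Fin (n+1) × Fin q → ℝ) (c : Fin (n+1) × Fin q → Fin q → ℝ),
      ∀ k, k ≤ 2*n → ∀ x y, U k x y = ∑ j, d j ^ k * (c j x * c j y) := by
  classical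
  -- an invertible Hermitian square root of A
  obtain ⟨R, hR2, hRH, hRdet⟩ : ∃ R : Matrix (Fin (n+1) × Fin q) (Fin (n+1) × Fin q) ℝ,
      R * R = A ∧ R.IsHermitian ∧ IsUnit R.det := by
    refine ⟨CFC.sqrt A, CFC.sqrt_mul_sqrt_self A hA.posSemidef.nonneg,
      (Matrix.nonneg_iff_posSemidef.mp (CFC.sqrt_nonneg A)).1, ?_⟩
    have hdet : (CFC.sqrt A).det * (CFC.sqrt A).det = A.det := by
      rw [← det_mul, CFC.sqrt_mul_sqrt_self A hA.posSemidef.nonneg]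
    have hne : (CFC.sqrt A).det ≠ 0 := by
      intro h
      have h2 := hA.det_pos
      rw [← hdet, h, mul_zero] at h2
      exact lt_irrefl _ h2
    exact hne.isUnit
  have hRiR : R⁻¹ * R = 1 := nonsing_inv_mul R hRdet
  have hRRi : R * R⁻¹ = 1 := mul_nonsing_inv R hRdet
  have hRiH : R⁻¹.IsHermitian := hRH.inv
  -- simultaneous diagonalization: a matrix V with Vᴴ A V = 1 and Vᴴ B V diagonal
  obtain ⟨V, d, hV1, hV2⟩ : ∃ (V : Matrix (Fin (n+1) × Fin q) (Fin (n+1) × Fin q) ℝ)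
      (d : Fin (n+1) × Fin q → ℝ), Vᴴ * A * V = 1 ∧ Vᴴ * B * V = diagonal d := by
    have hC : (R⁻¹ * B * R⁻¹).IsHermitian := by
      have h : (R⁻¹ * B * R⁻¹)ᴴ = R⁻¹ᴴ * Bᴴ * R⁻¹ᴴ := by
        rw [conjTranspose_mul, conjTranspose_mul, mul_assoc]
      rw [IsHermitian, h, hRiH.eq, hB.eq]
    obtain ⟨U₀, hU₀mem, d, hspec⟩ : ∃ (U₀ : Matrix (Fin (n+1) × Fin q) (Fin (n+1) × Fin q) ℝ),
        U₀ ∈ Matrix.unitaryGroup (Fin (n+1) × Fin q) ℝ ∧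
        ∃ d : Fin (n+1) × Fin q → ℝ, R⁻¹ * B * R⁻¹ = U₀ * diagonal d * star U₀ := by
      refine ⟨hC.eigenvectorUnitary, hC.eigenvectorUnitary.2, hC.eigenvalues, ?_⟩
      have h := hC.spectral_theorem
      rwa [RCLike.ofReal_real_eq_id, Function.id_comp] at h
    have hU₀1 : U₀ * star U₀ = 1 := (Matrix.mem_unitaryGroup_iff).mp hU₀mem
    have hU₀2 : star U₀ * U₀ = 1 := (Matrix.mem_unitaryGroup_iff').mp hU₀mem
    refine ⟨R⁻¹ * U₀, d, ?_, ?_⟩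
    · have hVH : (R⁻¹ * U₀)ᴴ = star U₀ * R⁻¹ := by
        rw [conjTranspose_mul, hRiH.eq, Matrix.star_eq_conjTranspose]
      rw [hVH, ← hR2]
      calc star U₀ * R⁻¹ * (R * R) * (R⁻¹ * U₀)
          = star U₀ * ((R⁻¹ * R) * ((R * R⁻¹) * U₀)) := by simp only [mul_assoc]
        _ = 1 := by rw [hRiR, hRRi, one_mul, one_mul, hU₀2]
    · have hVH : (R⁻¹ * U₀)ᴴ = star U₀ * R⁻¹ := by
        rw [conjTranspose_mul, hRiH.eq, Matrix.star_eq_conjTranspose]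
      have hBC : B = R * (U₀ * diagonal d * star U₀) * R := by
        have hmid : R * (R⁻¹ * B * R⁻¹) * R = B := by
          calc R * (R⁻¹ * B * R⁻¹) * R = (R * R⁻¹) * B * (R⁻¹ * R) := by
                simp only [mul_assoc]
            _ = B := by rw [hRRi, hRiR, one_mul, mul_one]
        rw [← hspec, hmid]
      rw [hVH, hBC]
      calc star U₀ * R⁻¹ * (R * (U₀ * diagonal d * star U₀) * R) * (R⁻¹ * U₀)
          = star U₀ * ((R⁻¹ * R) * (U₀ * diagonal d * ((star U₀ * ((R * R⁻¹) * U₀))))) := by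
            simp only [mul_assoc]
        _ = star U₀ * (U₀ * diagonal d * (star U₀ * U₀)) := by
            rw [hRiR, hRRi, one_mul, one_mul]
        _ = diagonal d := by
            rw [hU₀2, mul_one, ← mul_assoc, hU₀2, one_mul]
  have hV3 : V * Vᴴ * A = 1 := by
    have h1 : (Vᴴ * A) * V = 1 := by rw [← hV1, mul_assoc]
    have h2 := mul_eq_one_comm.mp h1
    rw [← h2, mul_assoc]
  have hV4 : A * (V * Vᴴ) = 1 := by
    have h := congrArg conjTranspose hV3
    rwa [conjTranspose_mul, conjTranspose_mul, conjTranspose_conjTranspose, hA.1.eq,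
      conjTranspose_one] at h
  have hVAV : ∀ X : Matrix (Fin (n+1) × Fin q) (Fin q) ℝ, Vᴴ * (A * (V * X)) = X := by
    intro X
    rw [← Matrix.mul_assoc, ← Matrix.mul_assoc, hV1, Matrix.one_mul]
  have hBV : B * V = A * V * diagonal d := by
    calc B * V = (A * (V * Vᴴ)) * (B * V) := by rw [hV4, one_mul]
      _ = A * V * (Vᴴ * B * V) := by simp only [mul_assoc]
      _ = A * V * diagonal d := by rw [hV2]
  have hdd : ∀ a b : ℕ,
      (diagonal (fun j => d j ^ a) : Matrix (Fin (n+1) × Fin q) (Fin (n+1) × Fin q) ℝ)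
        * diagonal (fun j => d j ^ b) = diagonal (fun j => d j ^ (a+b)) := by
    intro a b
    rw [diagonal_mul_diagonal]
    exact congrArg diagonal (funext fun j => (pow_add (d j) a b).symm)
  -- block-column inclusion matrices
  obtain ⟨E, hEdef⟩ : ∃ E : Fin (n+1) → Matrix (Fin (n+1) × Fin q) (Fin q) ℝ,
      E = fun i => Matrix.of (fun v c => if v = (i, c) then 1 else 0) := ⟨_, rfl⟩
  have hMulE : ∀ (M : Matrix (Fin (n+1) × Fin q) (Fin (n+1) × Fin q) ℝ) (i : Fin (n+1)),
      M * E i = Matrix.of (fun v c => M v (i, c)) := by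
    intro M i
    ext v c
    simp only [hEdef, Matrix.mul_apply, Matrix.of_apply, mul_ite, mul_one, mul_zero]
    simp [Finset.sum_ite_eq']
  have hEMul : ∀ (M : Matrix (Fin (n+1) × Fin q) (Fin q) ℝ) (i : Fin (n+1)),
      (E i)ᴴ * M = Matrix.of (fun c u => M (i, c) u) := by
    intro M i
    ext c u
    simp only [hEdef, Matrix.mul_apply, Matrix.conjTranspose_apply, Matrix.of_apply,
      star_trivial, ite_mul, one_mul, zero_mul]
    simp [Finset.sum_ite_eq]
  have LB3 : ∀ (i j : Fin (n+1)), (j : ℕ) = (i : ℕ) + 1 → B * E i = A * E j := by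
    intro i j hij
    rw [hMulE, hMulE]
    ext v c
    simp only [Matrix.of_apply]
    rw [hBdef, hAdef]
    have h : v.1.1 + i.1 + 1 = v.1.1 + j.1 := by omega
    rw [h]
  have LA : ∀ a b : Fin (n+1), (E a)ᴴ * (A * E b)
      = Matrix.of (fun x y => U (a.1 + b.1) x y) := by
    intro a b
    rw [hMulE, hEMul]
    ext x y
    simp only [Matrix.of_apply]
    rw [hAdef]
  obtain ⟨W, hWdef⟩ : ∃ W : Matrix (Fin (n+1) × Fin q) (Fin q) ℝ,
      W = Vᴴ * (A * E 0) := ⟨_, rfl⟩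
  obtain ⟨G, hGdef⟩ : ∃ G : ℕ → Matrix (Fin (n+1) × Fin q) (Fin q) ℝ,
      G = fun k => V * (diagonal (fun j => d j ^ k) * W) := ⟨_, rfl⟩
  have hG0 : G 0 = E 0 := by
    have h1 : diagonal (fun j : Fin (n+1) × Fin q => d j ^ 0)
        = (1 : Matrix (Fin (n+1) × Fin q) (Fin (n+1) × Fin q) ℝ) := by
      rw [show (fun j : Fin (n+1) × Fin q => d j ^ 0) = fun _ => (1:ℝ)
        from funext fun j => pow_zero _, diagonal_one]
    calc G 0 = V * (Vᴴ * (A * E 0)) := by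
          rw [hGdef]
          simp only [h1, Matrix.one_mul, hWdef]
      _ = (V * Vᴴ * A) * E 0 := by simp only [Matrix.mul_assoc]
      _ = E 0 := by rw [hV3, Matrix.one_mul]
  have hGsucc : ∀ k, B * G k = A * G (k+1) := by
    intro k
    rw [hGdef]
    calc B * (V * (diagonal (fun j => d j ^ k) * W))
        = (B * V) * (diagonal (fun j => d j ^ k) * W) := by rw [Matrix.mul_assoc]
      _ = (A * V) * (diagonal d * (diagonal (fun j => d j ^ k) * W)) := by
          rw [hBV]; simp only [Matrix.mul_assoc]
      _ = A * (V * (diagonal (fun j => d j ^ (k+1)) * W)) := by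
          have hdd1 : diagonal d * diagonal (fun j => d j ^ k)
              = diagonal (fun j : Fin (n+1) × Fin q => d j ^ (k+1)) := by
            rw [diagonal_mul_diagonal]
            exact congrArg diagonal (funext fun j => by rw [pow_succ]; ring)
          rw [← Matrix.mul_assoc (diagonal d), hdd1, Matrix.mul_assoc]
  haveI : Invertible A := hA.isUnit.invertible
  have hGE : ∀ k (hk : k ≤ n), G k = E ⟨k, Nat.lt_succ_of_le hk⟩ := by
    intro k
    induction k with
    | zero =>
        intro _
        rw [hG0]
        congr 1
    | succ k ih =>
        intro hk
        have hk' : k ≤ n := Nat.le_of_succ_le hk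
        have h1 : A * G (k+1) = A * E ⟨k+1, Nat.lt_succ_of_le hk⟩ := by
          rw [← hGsucc, ih hk',
            LB3 ⟨k, Nat.lt_succ_of_le hk'⟩ ⟨k+1, Nat.lt_succ_of_le hk⟩ rfl]
        exact Matrix.mul_right_injective_of_invertible A h1
  obtain ⟨F, hFdef⟩ : ∃ F : ℕ → Matrix (Fin q) (Fin q) ℝ,
      F = fun k => Wᴴ * (diagonal (fun j => d j ^ k) * W) := ⟨_, rfl⟩
  have hGconj : ∀ k, (G k)ᴴ = Wᴴ * (diagonal (fun j => d j ^ k) * Vᴴ) := by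
    intro k
    rw [hGdef]
    rw [conjTranspose_mul, conjTranspose_mul, diagonal_conjTranspose]
    have h : star (fun j : Fin (n+1) × Fin q => d j ^ k)
        = fun j : Fin (n+1) × Fin q => d j ^ k := by
      funext j; simp
    rw [h, Matrix.mul_assoc]
  have hFab : ∀ a b : ℕ, (G a)ᴴ * (A * G b) = F (a+b) := by
    intro a b
    rw [hGconj, hGdef, hFdef]
    calc Wᴴ * (diagonal (fun j => d j ^ a) * Vᴴ) * (A * (V * (diagonal (fun j => d j ^ b) * W)))
        = Wᴴ * (diagonal (fun j => d j ^ a) * (Vᴴ * (A * (V * (diagonal (fun j => d j ^ b) * W))))) := by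
          simp only [Matrix.mul_assoc]
      _ = Wᴴ * (diagonal (fun j => d j ^ a) * (diagonal (fun j => d j ^ b) * W)) := by
          rw [hVAV]
      _ = Wᴴ * (diagonal (fun j => d j ^ (a+b)) * W) := by
          rw [← Matrix.mul_assoc (diagonal fun j => d j ^ a), hdd]
  have hFU : ∀ a b : Fin (n+1), F (a.1 + b.1) = Matrix.of (fun x y => U (a.1 + b.1) x y) := by
    intro a b
    rw [← hFab a.1 b.1]
    rw [hGE a.1 (Nat.lt_succ_iff.mp a.isLt), hGE b.1 (Nat.lt_succ_iff.mp b.isLt)]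
    rw [LA]
  have hFentry : ∀ (k : ℕ) (x y : Fin q), F k x y = ∑ j, d j ^ k * (W j x * W j y) := by
    intro k x y
    rw [hFdef]
    have h1 : ∀ j : Fin (n+1) × Fin q,
        (Wᴴ * diagonal (fun j => d j ^ k)) x j = W j x * d j ^ k := by
      intro j
      simp only [Matrix.mul_apply, Matrix.conjTranspose_apply, star_trivial,
        diagonal_apply, mul_ite, mul_zero]
      simp [Finset.sum_ite_eq']
    calc (Wᴴ * (diagonal (fun j => d j ^ k) * W)) x y
        = (Wᴴ * diagonal (fun j => d j ^ k) * W) x y := by rw [Matrix.mul_assoc]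
      _ = ∑ j, (Wᴴ * diagonal (fun j => d j ^ k)) x j * W j y := by rw [Matrix.mul_apply]
      _ = ∑ j, d j ^ k * (W j x * W j y) := by
          refine Finset.sum_congr rfl fun j _ => ?_
          rw [h1]; ring
  refine ⟨d, fun j x => W j x, fun k hk x y => ?_⟩
  have hak : min k n ≤ n := min_le_right _ _
  have h2 := hFU ⟨min k n, Nat.lt_succ_of_le hak⟩
    ⟨k - min k n, Nat.lt_succ_of_le (by omega)⟩
  simp only at h2
  have hab : min k n + (k - min k n) = k := by omega
  rw [hab] at h2
  have h3 : F k x y = U k x y := by rw [h2]; simp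
  rw [← h3, hFentry]

end Quadrature


/-- rank-one outer products are positive semidefinite -/
lemma posSemidef_outer {p : ℕ} (c : Fin p → ℝ) :
    (Matrix.of fun a b => c a * c b).PosSemidef := by
  refine posSemidef_iff_dotProduct_mulVec.mpr ⟨?_, ?_⟩
  · ext a b
    simp only [Matrix.conjTranspose_apply, Matrix.of_apply, star_trivial]
    ring
  · intro x
    have h : star x ⬝ᵥ (Matrix.of fun a b => c a * c b) *ᵥ x = (∑ a, c a * x a)^2 := by
      rw [pow_two, Finset.sum_mul_sum]
      simp only [dotProduct, Matrix.mulVec, Matrix.of_apply, star_trivial]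
      refine Finset.sum_congr rfl fun a _ => ?_
      simp only [dotProduct, Finset.mul_sum]
      refine Finset.sum_congr rfl fun b _ => ?_
      ring
    rw [h]
    positivity

/-- nonnegative scalar multiples of PSD matrices are PSD -/
lemma posSemidef_smul_nonneg {p : ℕ} {M : Matrix (Fin p) (Fin p) ℝ} (hM : M.PosSemidef)
    {a : ℝ} (ha : 0 ≤ a) : (a • M).PosSemidef := by
  refine posSemidef_iff_dotProduct_mulVec.mpr ⟨?_, ?_⟩
  · have h := hM.1
    rw [IsHermitian, conjTranspose_smul, h.eq, star_trivial]
  · intro x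
    rw [smul_mulVec, dotProduct_smul, smul_eq_mul]
    exact mul_nonneg ha (hM.dotProduct_mulVec_nonneg x)

/-- the reindexing equivalence splitting off the first block row -/
def hankelBlockEquiv (N p : ℕ) : (Fin p ⊕ (Fin (N+1) × Fin p)) ≃ (Fin (N+2) × Fin p) where
  toFun := Sum.elim (fun a => ((0 : Fin (N+2)), a)) (fun v => (v.1.succ, v.2))
  invFun v := Fin.cases (Sum.inl v.2) (fun i' => Sum.inr (i', v.2)) v.1
  left_inv := by rintro (a | ⟨i, a⟩) <;> simp
  right_inv := by
    rintro ⟨i, a⟩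
    induction i using Fin.cases <;> simp

lemma hankelBlockEquiv_symm_zero (N p : ℕ) (a : Fin p) :
    (hankelBlockEquiv N p).symm (0, a) = Sum.inl a := by
  simp [hankelBlockEquiv]

lemma hankelBlockEquiv_symm_succ (N p : ℕ) (i : Fin (N+1)) (a : Fin p) :
    (hankelBlockEquiv N p).symm (i.succ, a) = Sum.inr (i, a) := by
  simp [hankelBlockEquiv]


/-- Corollary 1.3: solution of the strong truncated matrix Hamburger moment problem in the
nonsingular case. If the moment matrix `(S_{i+j-2-2n₁})_{i,j=1}^{n₁+n₂+1}` is positive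
definite, then there is a finitely atomic representing measure with nonzero real atoms. -/
theorem strong_truncated_matrix_hamburger_nonsingular (p n₁ n₂ : ℕ)
    (hp : 1 ≤ p) (hn₁ : 1 ≤ n₁) (hn₂ : 1 ≤ n₂)
    (S : ℤ → Matrix (Fin p) (Fin p) ℝ)
    (hSsym : ∀ k : ℤ, -(2 * (n₁ : ℤ)) ≤ k → k ≤ 2 * (n₂ : ℤ) → (S k).IsSymm)
    (hM : (strongMomentMatrix p n₁ n₂ S).PosDef) :
    ∃ (ℓ : ℕ) (x : Fin ℓ → ℝ) (B : Fin ℓ → Matrix (Fin p) (Fin p) ℝ),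
      1 ≤ ℓ ∧
      Function.Injective x ∧
      (∀ j, x j ≠ 0) ∧
      (∀ j, (B j).PosSemidef) ∧
      (∀ k : ℤ, -(2 * (n₁ : ℤ)) ≤ k → k ≤ 2 * (n₂ : ℤ) →
        S k = ∑ j, x j ^ k • B j) := by
  classical
  obtain ⟨H, hHdef⟩ : ∃ H, H = strongMomentMatrix p n₁ n₂ S := ⟨_, rfl⟩
  have hH : H.PosDef := hHdef ▸ hM
  -- the first block row of the extension
  obtain ⟨Y, hYdef⟩ : ∃ Y : Matrix (Fin p) (Fin (n₁+n₂+1) × Fin p) ℝ,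
      ∀ a jb, Y a jb =
        if jb.1.1 = 0 then 0 else S ((jb.1.1 : ℤ) + 1 - 2 - 2*(n₁:ℤ)) a jb.2 :=
    ⟨Matrix.of (fun a jb =>
        if jb.1.1 = 0 then 0 else S ((jb.1.1 : ℤ) + 1 - 2 - 2*(n₁:ℤ)) a jb.2),
      fun a jb => rfl⟩
  have hYHY : (Y * H⁻¹ * Yᴴ).IsHermitian :=
    Matrix.isHermitian_mul_mul_conjTranspose Y hH.1.inv
  obtain ⟨t, ht⟩ := exists_smul_one_sub_posDef (Y * H⁻¹ * Yᴴ) hYHY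
  -- the extended one-sided moment sequence
  obtain ⟨U, hUdef⟩ : ∃ U : ℕ → Matrix (Fin p) (Fin p) ℝ,
      ∀ k, U k = if k = 0 then t • 1 else if k = 1 then 0 else
        if k ≤ 2*(n₁+n₂)+2 then S ((k:ℤ) - 2 - 2*(n₁:ℤ)) else 0 :=
    ⟨fun k => if k = 0 then t • 1 else if k = 1 then 0 else
        if k ≤ 2*(n₁+n₂)+2 then S ((k:ℤ) - 2 - 2*(n₁:ℤ)) else 0, fun k => rfl⟩
  have hUmid : ∀ k : ℕ, 2 ≤ k → k ≤ 2*(n₁+n₂)+2 → U k = S ((k:ℤ) - 2 - 2*(n₁:ℤ)) := by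
    intro k h2 hb
    rw [hUdef k, if_neg (by omega), if_neg (by omega), if_pos hb]
  have hUsym : ∀ k, (U k).IsHermitian := by
    intro k
    rw [hUdef k]
    split_ifs with h0 h1 hmid
    · rw [IsHermitian, conjTranspose_smul, conjTranspose_one, star_trivial]
    · exact Matrix.isHermitian_zero
    · have hs := hSsym ((k:ℤ) - 2 - 2*(n₁:ℤ)) (by omega) (by omega)
      rw [IsHermitian, conjTranspose_eq_transpose_of_trivial, hs]
    · exact Matrix.isHermitian_zero
  have hUentry : ∀ (k : ℕ) (a b : Fin p), U k a b = U k b a := by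
    intro k a b
    conv_lhs => rw [← (hUsym k).eq]
    rw [Matrix.conjTranspose_apply, star_trivial]
  -- the two pencil matrices
  obtain ⟨A, hAdef⟩ : ∃ A : Matrix (Fin (n₁+n₂+2) × Fin p) (Fin (n₁+n₂+2) × Fin p) ℝ,
      ∀ i j, A i j = U (i.1.1 + j.1.1) i.2 j.2 :=
    ⟨Matrix.of (fun i j => U (i.1.1 + j.1.1) i.2 j.2), fun i j => rfl⟩
  obtain ⟨B, hBdef⟩ : ∃ B : Matrix (Fin (n₁+n₂+2) × Fin p) (Fin (n₁+n₂+2) × Fin p) ℝ,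
      ∀ i j, B i j = U (i.1.1 + j.1.1 + 1) i.2 j.2 :=
    ⟨Matrix.of (fun i j => U (i.1.1 + j.1.1 + 1) i.2 j.2), fun i j => rfl⟩
  have hBherm : B.IsHermitian := by
    refine Matrix.IsHermitian.ext fun i j => ?_
    rw [star_trivial, hBdef j i, hBdef i j, hUentry (j.1.1 + i.1.1 + 1) j.2 i.2]
    have h : j.1.1 + i.1.1 + 1 = i.1.1 + j.1.1 + 1 := by omega
    rw [h]
  -- A is the reindexed bordered extension of H, hence positive definite
  have hApd : A.PosDef := by
    have hSchur : ((t • (1 : Matrix (Fin p) (Fin p) ℝ)) - Y * H⁻¹ * Yᴴ).PosDef := ht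
    have hblk : (fromBlocks (t • (1 : Matrix (Fin p) (Fin p) ℝ)) Y Yᴴ H).PosDef :=
      posDef_fromBlocks₂₂' hH hSchur
    have hsub := posDef_submatrix_equiv hblk (hankelBlockEquiv (n₁+n₂) p).symm
    have hAeq : A = (fromBlocks (t • (1 : Matrix (Fin p) (Fin p) ℝ)) Y Yᴴ H).submatrix
        (hankelBlockEquiv (n₁+n₂) p).symm (hankelBlockEquiv (n₁+n₂) p).symm := by
      have hYU : ∀ (j : Fin (n₁+n₂+1)) (a b : Fin p), Y a (j, b) = U (j.1 + 1) a b := by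
        intro j a b
        rw [hYdef, hUdef]
        by_cases h0 : j.1 = 0
        · rw [if_pos h0, if_neg (by omega), if_pos (by omega)]
          simp
        · rw [if_neg h0, if_neg (by omega), if_neg (by omega), if_pos (by omega)]
          have : ((j.1 : ℤ)) + 1 - 2 - 2*(n₁:ℤ) = ((j.1 + 1 : ℕ) : ℤ) - 2 - 2*(n₁:ℤ) := by
            push_cast; ring
          rw [this]
      have hHU : ∀ (i j : Fin (n₁+n₂+1)) (a b : Fin p),
          H (i, a) (j, b) = U (i.1 + j.1 + 2) a b := by
        intro i j a b
        rw [hHdef, hUmid (i.1 + j.1 + 2) (by omega) (by omega)]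
        simp only [strongMomentMatrix]
        congr 2
        push_cast
        ring
      ext ⟨i, a⟩ ⟨j, b⟩
      rw [Matrix.submatrix_apply, hAdef]
      induction i using Fin.cases with
      | zero =>
          rw [hankelBlockEquiv_symm_zero]
          induction j using Fin.cases with
          | zero =>
              rw [hankelBlockEquiv_symm_zero]
              simp only [fromBlocks_apply₁₁]
              rw [hUdef]
              simp
          | succ j =>
              rw [hankelBlockEquiv_symm_succ]
              simp only [fromBlocks_apply₁₂]
              rw [hYU]
              congr 1
              simp
      | succ i =>
          rw [hankelBlockEquiv_symm_succ]
          induction j using Fin.cases with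
          | zero =>
              rw [hankelBlockEquiv_symm_zero]
              simp only [fromBlocks_apply₂₁]
              rw [Matrix.conjTranspose_apply, star_trivial, hYU i b a,
                hUentry (i.1+1) b a]
              have h1 : (Fin.succ i).1 + (0 : Fin (n₁+n₂+2)).1 = i.1 + 1 := by simp
              rw [h1]
          | succ j =>
              rw [hankelBlockEquiv_symm_succ]
              simp only [fromBlocks_apply₂₂]
              rw [hHU]
              congr 1
              simp [Fin.val_succ]
              omega
    rw [hAeq]
    exact hsub
  -- apply the quadrature lemma with n := n₁+n₂+1, q := p
  obtain ⟨d, c, hQuad⟩ := hankel_pencil_quadrature (n := n₁+n₂+1) (q := p) U A B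
    hAdef hBdef hApd hBherm
  -- group the nodes
  obtain ⟨Wm, hWmdef⟩ : ∃ Wm : ℝ → Matrix (Fin p) (Fin p) ℝ,
      ∀ v, Wm v = ∑ j ∈ Finset.univ.filter (fun j => d j = v),
        Matrix.of (fun a b => c j a * c j b) :=
    ⟨fun v => ∑ j ∈ Finset.univ.filter (fun j => d j = v),
        Matrix.of (fun a b => c j a * c j b), fun v => rfl⟩
  have hWmPSD : ∀ v, (Wm v).PosSemidef := by
    intro v
    rw [hWmdef v]
    refine Finset.sum_induction _ _ (fun a b ha hb => ha.add hb) Matrix.PosSemidef.zero ?_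
    intro j _
    exact posSemidef_outer (c j)
  obtain ⟨s, hsdef⟩ : ∃ s : Finset ℝ, s = (Finset.univ.image d).erase 0 := ⟨_, rfl⟩
  -- the representation of the inner moments
  have key : ∀ e : ℕ, 2 ≤ e → e ≤ 2*(n₁+n₂)+2 →
      U e = ∑ v ∈ s, v^e • Wm v := by
    intro e he2 heb
    have h0 : ∑ v ∈ s, v^e • Wm v = ∑ v ∈ Finset.univ.image d, v^e • Wm v := by
      rw [hsdef]
      exact Finset.sum_erase _ (by rw [zero_pow (by omega : e ≠ 0), zero_smul])
    have h1 : ∑ v ∈ Finset.univ.image d, v^e • Wm v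
        = ∑ j, d j ^ e • Matrix.of (fun a b => c j a * c j b) := by
      have h2 : ∀ v ∈ Finset.univ.image d, v^e • Wm v
          = ∑ j ∈ Finset.univ.filter (fun j => d j = v),
              d j ^ e • Matrix.of (fun a b => c j a * c j b) := by
        intro v _
        rw [hWmdef v, Finset.smul_sum]
        refine Finset.sum_congr rfl fun j hj => ?_
        rw [(Finset.mem_filter.mp hj).2]
      rw [Finset.sum_congr rfl h2]
      exact Finset.sum_fiberwise_of_maps_to (fun j _ => Finset.mem_image_of_mem d
        (Finset.mem_univ j)) _
    rw [h0, h1]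
    ext a b
    rw [hQuad e (by omega) a b, Matrix.sum_apply]
    refine Finset.sum_congr rfl fun j _ => ?_
    simp [smul_eq_mul]
  -- the node set is nonempty
  have hsne : s.Nonempty := by
    by_contra hemp
    rw [Finset.not_nonempty_iff_eq_empty] at hemp
    have hall : ∀ j, d j = 0 := by
      intro j
      by_contra hj
      have hmem : d j ∈ s := by
        rw [hsdef]
        exact Finset.mem_erase.mpr ⟨hj, Finset.mem_image_of_mem d (Finset.mem_univ j)⟩
      rw [hemp] at hmem
      exact absurd hmem (Finset.notMem_empty _)
    obtain ⟨a0, ha0⟩ : ∃ a0 : Fin p, True := ⟨⟨0, hp⟩, trivial⟩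
    have hU2 : U 2 a0 a0 = 0 := by
      rw [hQuad 2 (by omega) a0 a0]
      refine Finset.sum_eq_zero fun j _ => ?_
      rw [hall j]
      norm_num
    obtain ⟨u, hudef⟩ : ∃ u : Fin (n₁+n₂+1) × Fin p,
        u = ((⟨0, by omega⟩ : Fin (n₁+n₂+1)), a0) := ⟨_, rfl⟩
    obtain ⟨x0, hx0def⟩ : ∃ x0 : (Fin (n₁+n₂+1) × Fin p) → ℝ, x0 = Pi.single u 1 :=
      ⟨_, rfl⟩
    have hpos : 0 < H u u := by
      have hx : x0 ≠ 0 := by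
        intro hz
        have h1 := congrFun hz u
        rw [hx0def] at h1
        simp at h1
      have h := hH.dotProduct_mulVec_pos hx
      have hdot : star x0 ⬝ᵥ H *ᵥ x0 = H u u := by
        rw [hx0def, mulVec_single]
        simp [dotProduct, Pi.single_apply]
      rwa [hdot] at h
    have hHu : H u u = U 2 a0 a0 := by
      rw [hudef, hHdef, hUmid 2 (le_refl 2) (by omega)]
      show S _ a0 a0 = S _ a0 a0
      congr 1
    rw [hHu, hU2] at hpos
    exact lt_irrefl _ hpos
  -- enumerate the nodes
  refine ⟨s.card, fun j => (s.equivFin.symm j : ℝ),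
    fun j => ((s.equivFin.symm j : ℝ))^(2*n₁+2) • Wm ((s.equivFin.symm j : ℝ)),
    Finset.card_pos.mpr hsne, ?_, ?_, ?_, ?_⟩
  · intro j₁ j₂ h
    exact s.equivFin.symm.injective (Subtype.coe_injective h)
  · intro j h0
    have hs0 : (0:ℝ) ∉ s := by
      rw [hsdef]
      exact Finset.notMem_erase 0 _
    exact hs0 (h0 ▸ (s.equivFin.symm j).2)
  · intro j
    refine posSemidef_smul_nonneg (hWmPSD _) ?_
    rw [show 2*n₁+2 = (n₁+1)*2 by ring, pow_mul]
    exact sq_nonneg _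
  · intro k hk1 hk2
    obtain ⟨e, he⟩ : ∃ e : ℕ, (e : ℤ) = k + 2*(n₁:ℤ) + 2 :=
      ⟨(k + 2*(n₁:ℤ) + 2).toNat, Int.toNat_of_nonneg (by omega)⟩
    have he2 : 2 ≤ e := by omega
    have heb : e ≤ 2*(n₁+n₂)+2 := by omega
    have hSU : S k = U e := by
      rw [hUmid e he2 heb]
      have harg : k = (e:ℤ) - 2 - 2*(n₁:ℤ) := by omega
      rw [← harg]
    rw [hSU, key e he2 heb]
    have hterm : ∀ v : ℝ, v ≠ 0 → v^(k:ℤ) • ((v^(2*n₁+2)) • Wm v) = v^e • Wm v := by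
      intro v hv
      rw [smul_smul]
      congr 1
      rw [show (v:ℝ)^(2*n₁+2) = v^((2*n₁+2 : ℕ) : ℤ) from (zpow_natCast v (2*n₁+2)).symm,
        ← zpow_add₀ hv, show (k + ((2*n₁+2 : ℕ):ℤ)) = (e:ℤ) by push_cast; omega,
        zpow_natCast]
    calc ∑ v ∈ s, v^e • Wm v
        = ∑ v : {x // x ∈ s}, (v:ℝ)^e • Wm v := (Finset.sum_coe_sort s _).symm
      _ = ∑ j : Fin s.card, ((s.equivFin.symm j : ℝ))^e • Wm ((s.equivFin.symm j : ℝ)) :=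
          (Equiv.sum_comp s.equivFin.symm (fun v : {x // x ∈ s} => (v:ℝ)^e • Wm v)).symm
      _ = ∑ j : Fin s.card, ((s.equivFin.symm j : ℝ))^(k:ℤ)
            • (((s.equivFin.symm j : ℝ))^(2*n₁+2) • Wm ((s.equivFin.symm j : ℝ))) := by
          refine Finset.sum_congr rfl fun j _ => ?_
          have hs0 : (0:ℝ) ∉ s := by
            rw [hsdef]
            exact Finset.notMem_erase 0 _
          exact (hterm _ (fun h0 => hs0 (h0 ▸ (s.equivFin.symm j).2))).symm
end

section
/- Let p, n ≥ 1, let S = (S_0, …, S_{2n}) be a truncated matrix moment sequence whose moment matrix M(n) is positive definite, and let t ∈ ℝ. For 0 ≤ i ≤ n let v_i denote the (n+1)p × p block column (S_i; S_{i+1}; …; S_{i+n}). Then the (n+1)p × np matrix with block columns v_1 − t·v_0, v_2 − t·v_1, …, v_n − t·v_{n−1} has rank np; consequently the (x−t)-localizing moment matrix H_{x−t}(n−1) satisfies rank H_{x−t}(n−1) ≥ (n−1)p. -/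
open Matrix

/-- The `(n+1)p × np` matrix whose block columns are
`v₁ - t·v₀, v₂ - t·v₁, …, vₙ - t·v_{n-1}`, where `vᵢ = (Sᵢ; S_{i+1}; …; S_{i+n})`. -/
def shiftedTallMatrix (p n : ℕ) (t : ℝ) (S : ℕ → Matrix (Fin p) (Fin p) ℝ) :
    Matrix (Fin (n + 1) × Fin p) (Fin n × Fin p) ℝ :=
  fun i j => S (i.1.1 + j.1.1 + 1) i.2 j.2 - t * S (i.1.1 + j.1.1) i.2 j.2

/-- Auxiliary "shift minus t" matrix `P`. -/
def auxP (p m : ℕ) (t : ℝ) : Matrix (Fin (m + 1) × Fin p) (Fin m × Fin p) ℝ :=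
  fun k j => ((if k.1 = j.1.succ then (1:ℝ) else 0) - t * (if k.1 = j.1.castSucc then 1 else 0)) *
    (if k.2 = j.2 then 1 else 0)

/-- Left inverse of `auxP`. -/
def auxQ (p m : ℕ) (t : ℝ) : Matrix (Fin m × Fin p) (Fin (m + 1) × Fin p) ℝ :=
  fun j k => (if j.1.1 + 1 ≤ k.1.1 then t ^ (k.1.1 - j.1.1 - 1) else 0) *
    (if j.2 = k.2 then 1 else 0)

lemma auxQ_mul_auxP (p m : ℕ) (t : ℝ) : auxQ p m t * auxP p m t = 1 := by
  ext ⟨j, q⟩ ⟨j', q'⟩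
  simp only [mul_apply, auxQ, auxP, Fintype.sum_prod_type]
  have hcol : ∀ k : Fin (m + 1),
      (∑ s : Fin p, ((if (j:ℕ) + 1 ≤ (k:ℕ) then t ^ ((k:ℕ) - (j:ℕ) - 1) else 0) *
        (if q = s then (1:ℝ) else 0)) *
        (((if k = j'.succ then (1:ℝ) else 0) - t * (if k = j'.castSucc then 1 else 0)) *
          (if s = q' then 1 else 0)))
      = ((if (j:ℕ) + 1 ≤ (k:ℕ) then t ^ ((k:ℕ) - (j:ℕ) - 1) else 0) *
        ((if k = j'.succ then (1:ℝ) else 0) - t * (if k = j'.castSucc then 1 else 0))) *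
        (if q = q' then 1 else 0) := by
    intro k
    rw [Finset.sum_eq_single q (fun s _ hs => by simp [Ne.symm hs]) (by simp)]
    by_cases h : q = q' <;> simp [h] <;> ring
  rw [Finset.sum_congr rfl fun k _ => hcol k, ← Finset.sum_mul]
  have h1 : (∑ k : Fin (m + 1),
      (if (j:ℕ) + 1 ≤ (k:ℕ) then t ^ ((k:ℕ) - (j:ℕ) - 1) else 0) *
        ((if k = j'.succ then (1:ℝ) else 0) - t * (if k = j'.castSucc then 1 else 0)))
      = (if (j:ℕ) + 1 ≤ (j':ℕ) + 1 then t ^ (((j':ℕ) + 1) - (j:ℕ) - 1) else 0)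
        - t * (if (j:ℕ) + 1 ≤ (j':ℕ) then t ^ ((j':ℕ) - (j:ℕ) - 1) else 0) := by
    simp only [mul_sub, Finset.sum_sub_distrib]
    congr 1
    · rw [Finset.sum_eq_single j'.succ (fun k _ hk => by simp [hk]) (by simp)]
      simp [Fin.val_succ]
    · rw [Finset.sum_eq_single j'.castSucc (fun k _ hk => by simp [hk]) (by simp)]
      simp only [Fin.coe_castSucc, if_pos rfl, mul_one]
      split_ifs <;> ring
  rw [h1]
  have h2 : (if (j:ℕ) + 1 ≤ (j':ℕ) + 1 then t ^ (((j':ℕ) + 1) - (j:ℕ) - 1) else 0)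
        - t * (if (j:ℕ) + 1 ≤ (j':ℕ) then t ^ ((j':ℕ) - (j:ℕ) - 1) else 0)
      = (if j = j' then (1:ℝ) else 0) := by
    rcases lt_trichotomy (j:ℕ) (j':ℕ) with h | h | h
    · rw [if_pos (by omega), if_pos (by omega), if_neg (by simp [Fin.ext_iff]; omega)]
      have he : (j':ℕ) + 1 - (j:ℕ) - 1 = ((j':ℕ) - (j:ℕ) - 1) + 1 := by omega
      rw [he, pow_succ', sub_self]
    · rw [if_pos (by omega), if_neg (by omega), if_pos (Fin.ext h)]
      have he : (j':ℕ) + 1 - (j:ℕ) - 1 = 0 := by omega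
      simp [he]
    · rw [if_neg (by omega), if_neg (by omega), if_neg (by simp [Fin.ext_iff]; omega)]
      simp
  rw [h2, one_apply]
  by_cases hj : j = j' <;> by_cases hq : q = q' <;> simp [hj, hq, Prod.ext_iff]

lemma momentMatrix_mul_auxP (p m : ℕ) (t : ℝ) (S : ℕ → Matrix (Fin p) (Fin p) ℝ) :
    momentMatrix p m S * auxP p m t = shiftedTallMatrix p m t S := by
  ext ⟨i, r⟩ ⟨j, q⟩
  simp only [mul_apply, momentMatrix, auxP, shiftedTallMatrix, Fintype.sum_prod_type]
  have hrow : ∀ k : Fin (m + 1),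
      (∑ s : Fin p, S ((i:ℕ) + (k:ℕ)) r s *
        (((if k = j.succ then (1:ℝ) else 0) - t * (if k = j.castSucc then 1 else 0)) *
          (if s = q then 1 else 0)))
      = S ((i:ℕ) + (k:ℕ)) r q * ((if k = j.succ then (1:ℝ) else 0) -
          t * (if k = j.castSucc then 1 else 0)) := by
    intro k
    rw [Finset.sum_eq_single q (fun s _ hs => by simp [hs]) (by simp)]
    simp
  rw [Finset.sum_congr rfl fun k _ => hrow k]
  have h1 : (∑ k : Fin (m + 1), S ((i:ℕ) + (k:ℕ)) r q *
        ((if k = j.succ then (1:ℝ) else 0) - t * (if k = j.castSucc then 1 else 0)))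
      = S ((i:ℕ) + ((j:ℕ) + 1)) r q - t * S ((i:ℕ) + (j:ℕ)) r q := by
    simp only [mul_sub, Finset.sum_sub_distrib]
    congr 1
    · rw [Finset.sum_eq_single j.succ (fun k _ hk => by simp [hk]) (by simp)]
      simp [Fin.val_succ]
    · rw [Finset.sum_eq_single j.castSucc (fun k _ hk => by simp [hk]) (by simp)]
      simp [mul_comm]
  rw [h1, ← Nat.add_assoc]

lemma auxP_rank (p m : ℕ) (t : ℝ) : (auxP p m t).rank = m * p := by
  refine le_antisymm ?_ ?_
  · simpa using (auxP p m t).rank_le_card_width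
  · have hinj : Function.Injective (auxP p m t).mulVecLin := by
      intro x y hxy
      have h1 : (auxQ p m t * auxP p m t).mulVec x = (auxQ p m t * auxP p m t).mulVec y := by
        rw [← mulVec_mulVec, ← mulVec_mulVec]
        simpa using congrArg (auxQ p m t).mulVec hxy
      simpa [auxQ_mul_auxP] using h1
    rw [Matrix.rank, LinearMap.finrank_range_of_inj hinj]
    simp [Module.finrank_fintype_fun_eq_card]

/-- Main rank computation for `shiftedTallMatrix`. -/
lemma shiftedTallMatrix_rank (p m : ℕ) (t : ℝ) (S : ℕ → Matrix (Fin p) (Fin p) ℝ)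
    (hM : (momentMatrix p m S).PosDef) : (shiftedTallMatrix p m t S).rank = m * p := by
  rw [← momentMatrix_mul_auxP p m t S,
    Matrix.rank_mul_eq_right_of_isUnit_det _ _ (isUnit_iff_ne_zero.mpr hM.det_pos.ne'),
    auxP_rank]

/-- Positive definiteness passes to principal submatrices given by injective maps. -/
lemma PosDef.submatrix_inj {α β : Type*} [Fintype α] [Fintype β] [DecidableEq α] [DecidableEq β]
    {M : Matrix β β ℝ} (hM : M.PosDef) {e : α → β} (he : Function.Injective e) :
    (M.submatrix e e).PosDef := by
  set E : Matrix β α ℝ := fun k i => if k = e i then 1 else 0 with hE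
  have hfac : M.submatrix e e = Eᵀ * M * E := by
    ext i j
    simp only [mul_apply, submatrix_apply, transpose_apply]
    simp only [hE]
    rw [Finset.sum_eq_single (e j) (fun l _ hl => by simp [hl]) (by simp)]
    rw [if_pos rfl, mul_one, Finset.sum_eq_single (e i) (fun k _ hk => by simp [hk]) (by simp)]
    simp
  refine posDef_iff_dotProduct_mulVec.mpr ⟨?_, ?_⟩
  · exact hM.1.submatrix e
  · intro x hx
    obtain ⟨i₀, hi₀⟩ := Function.ne_iff.mp hx
    simp only [Pi.zero_apply] at hi₀
    have hEx : E.mulVec x ≠ 0 := by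
      intro h
      apply hi₀
      have hval := congrFun h (e i₀)
      simp only [mulVec, dotProduct, Pi.zero_apply, hE] at hval
      rwa [Finset.sum_eq_single i₀
        (fun s _ hs => by rw [if_neg (fun hh => hs (he hh).symm), zero_mul])
        (by simp), if_pos rfl, one_mul] at hval
    have hpos := (posDef_iff_dotProduct_mulVec.mp hM).2 hEx
    rw [hfac]
    have key : star x ⬝ᵥ (Eᵀ * M * E).mulVec x
        = star (E.mulVec x) ⬝ᵥ M.mulVec (E.mulVec x) := by
      rw [← mulVec_mulVec, ← mulVec_mulVec, dotProduct_mulVec]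
      simp [vecMul_transpose]
    rw [key]
    exact hpos

/-- If `M(n)` is positive definite, the matrix with block columns
`v₁ - t·v₀, …, vₙ - t·v_{n-1}` has rank `np`; consequently
`rank H_{x-t}(n-1) ≥ (n-1)p`. -/
theorem shiftedTallMatrix_rank_and_locMatrix_rank (p n : ℕ) (hp : 1 ≤ p) (hn : 1 ≤ n)
    (S : ℕ → Matrix (Fin p) (Fin p) ℝ)
    (hSsym : ∀ i ≤ 2 * n, (S i).IsSymm)
    (hM : (momentMatrix p n S).PosDef) (t : ℝ) :
    (shiftedTallMatrix p n t S).rank = n * p ∧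
      (n - 1) * p ≤ (locMatrix p n t S).rank := by
  obtain ⟨m, rfl⟩ : ∃ m, n = m + 1 := ⟨n - 1, (Nat.succ_pred_eq_of_pos hn).symm⟩
  refine ⟨shiftedTallMatrix_rank p (m + 1) t S hM, ?_⟩
  have hMsmall : (momentMatrix p m S).PosDef := by
    have heq : momentMatrix p m S =
        (momentMatrix p (m + 1) S).submatrix (fun i => (i.1.castSucc, i.2))
          (fun i => (i.1.castSucc, i.2)) := rfl
    rw [heq]
    refine PosDef.submatrix_inj hM (fun a b h => ?_)
    simp only [Prod.ext_iff, Fin.castSucc_inj] at h ⊢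
    exact h
  have hsub : shiftedTallMatrix p m t S =
      locMatrix p (m + 1) t S *
        ((1 : Matrix (Fin (m + 1) × Fin p) (Fin (m + 1) × Fin p) ℝ).submatrix id
          (fun j : Fin m × Fin p => (j.1.castSucc, j.2))) := by
    ext i j
    simp only [mul_apply, submatrix_apply, id_eq]
    rw [Finset.sum_eq_single ((j.1.castSucc, j.2) : Fin (m + 1) × Fin p)
      (fun k _ hk => by simp [one_apply, hk]) (by simp)]
    rw [show (1 : Matrix (Fin (m + 1) × Fin p) (Fin (m + 1) × Fin p) ℝ)
      (id (j.1.castSucc, j.2)) (j.1.castSucc, j.2) = 1 from if_pos rfl, mul_one]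
    rfl
  calc (m + 1 - 1) * p = (shiftedTallMatrix p m t S).rank :=
        (shiftedTallMatrix_rank p m t S hMsmall).symm
    _ ≤ (locMatrix p (m + 1) t S).rank := by
        rw [hsub]; exact Matrix.rank_mul_le_left _ _
end

section
/- Let p, n ≥ 1, let S = (S_0, …, S_{2n}) be a truncated matrix moment sequence, and suppose x_1, …, x_ℓ ∈ ℝ are pairwise distinct and A_1, …, A_ℓ are nonzero positive semidefinite real symmetric p×p matrices with S_i = Σ_{j=1}^ℓ x_j^i A_j for all 0 ≤ i ≤ 2n. Let P_0, P_1, …, P_n be real p×p matrices giving a block column relation of the moment matrix M(n), i.e., Σ_{i=0}^n v_i P_i = 0, where v_i = (S_i; S_{i+1}; …; S_{i+n}) denotes the i-th block column of M(n). Then every atom x_j is a zero of the determinant of the matrix polynomial P(x) = Σ_{i=0}^n x^i P_i, i.e., det P(x_j) = 0 for every j = 1, …, ℓ. -/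
open Matrix

private lemma sum_mulVec'' {m ι : Type*} [Fintype m] (s : Finset ι)
    (M : ι → Matrix m m ℝ) (v : m → ℝ) :
    (∑ k ∈ s, M k) *ᵥ v = ∑ k ∈ s, M k *ᵥ v := by
  ext i
  simp [Matrix.mulVec, dotProduct, Matrix.sum_apply, Finset.sum_mul]
  rw [Finset.sum_comm]

private lemma dotProduct_sum'' {m ι : Type*} [Fintype m] (s : Finset ι)
    (v : m → ℝ) (w : ι → m → ℝ) :
    v ⬝ᵥ (∑ k ∈ s, w k) = ∑ k ∈ s, v ⬝ᵥ w k := by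
  simp [dotProduct, Finset.mul_sum, Finset.sum_apply]
  rw [Finset.sum_comm]

/-- Lemma 2.2: if a matrix polynomial `P(x) = ∑_{i=0}^n x^i P_i` is a block column relation
of the moment matrix `M(n)`, i.e. `∑_{i=0}^n v_i P_i = 0` where `v_i = (S_i; …; S_{i+n})`
is the `i`-th block column of `M(n)`, then every atom of a representing measure of the
sequence `S_0, …, S_{2n}` is a zero of `det P(x)`. -/
theorem atoms_are_zeros_of_block_column_relation (p n ℓ : ℕ) (hp : 1 ≤ p) (hn : 1 ≤ n)
    (S : ℕ → Matrix (Fin p) (Fin p) ℝ)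
    (hSsym : ∀ i ≤ 2 * n, (S i).IsSymm)
    (x : Fin ℓ → ℝ) (hinj : Function.Injective x)
    (A : Fin ℓ → Matrix (Fin p) (Fin p) ℝ)
    (hA : ∀ j, A j ≠ 0 ∧ (A j).PosSemidef)
    (hrep : ∀ i ≤ 2 * n, S i = ∑ j, x j ^ i • A j)
    (P : ℕ → Matrix (Fin p) (Fin p) ℝ)
    (hrel : ∀ r : Fin (n + 1), ∑ i ∈ Finset.range (n + 1), S (r.1 + i) * P i = 0) :
    ∀ j, (∑ i ∈ Finset.range (n + 1), x j ^ i • P i).det = 0 := by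
  intro j
  set Q : Fin ℓ → Matrix (Fin p) (Fin p) ℝ :=
    fun k => ∑ i ∈ Finset.range (n + 1), x k ^ i • P i with hQ
  -- the key identity: ∑ k, Q kᵀ * A k * Q k = 0
  have expand : ∀ k, (Q k)ᵀ * A k * Q k
      = ∑ r ∈ Finset.range (n + 1), ∑ i ∈ Finset.range (n + 1),
          (x k ^ r * x k ^ i) • ((P r)ᵀ * A k * P i) := by
    intro k
    rw [hQ]
    simp only [Matrix.transpose_sum, Matrix.transpose_smul, Finset.sum_mul, Finset.mul_sum,
      Matrix.smul_mul, Matrix.mul_smul, smul_smul, Matrix.mul_assoc]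
    rw [Finset.sum_comm]
    exact Finset.sum_congr rfl fun r _ => Finset.sum_congr rfl fun i _ => by
      rw [mul_comm (x k ^ i) (x k ^ r)]
  have key : ∑ k, (Q k)ᵀ * A k * Q k = 0 := by
    have h0 : ∑ r ∈ Finset.range (n + 1),
        (P r)ᵀ * ∑ i ∈ Finset.range (n + 1), S (r + i) * P i = 0 := by
      rw [← Fin.sum_univ_eq_sum_range
        (fun r => (P r)ᵀ * ∑ i ∈ Finset.range (n + 1), S (r + i) * P i)]
      simp [hrel]
    calc ∑ k, (Q k)ᵀ * A k * Q k
        = ∑ k, ∑ r ∈ Finset.range (n + 1), ∑ i ∈ Finset.range (n + 1),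
            (x k ^ r * x k ^ i) • ((P r)ᵀ * A k * P i) := by
          exact Finset.sum_congr rfl fun k _ => expand k
      _ = ∑ r ∈ Finset.range (n + 1), ∑ k, ∑ i ∈ Finset.range (n + 1),
            (x k ^ r * x k ^ i) • ((P r)ᵀ * A k * P i) := Finset.sum_comm
      _ = ∑ r ∈ Finset.range (n + 1), ∑ i ∈ Finset.range (n + 1), ∑ k,
            (x k ^ r * x k ^ i) • ((P r)ᵀ * A k * P i) := by
          exact Finset.sum_congr rfl fun r _ => Finset.sum_comm
      _ = ∑ r ∈ Finset.range (n + 1),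
            (P r)ᵀ * ∑ i ∈ Finset.range (n + 1), S (r + i) * P i := by
          refine Finset.sum_congr rfl fun r hr => ?_
          rw [Finset.mul_sum]
          refine Finset.sum_congr rfl fun i hi => ?_
          have hri : r + i ≤ 2 * n := by
            have hr' := Finset.mem_range.mp hr
            have hi' := Finset.mem_range.mp hi
            omega
          rw [hrep _ hri, Finset.sum_mul, Finset.mul_sum]
          refine Finset.sum_congr rfl fun k _ => ?_
          rw [Matrix.smul_mul, Matrix.mul_smul, pow_add, Matrix.mul_assoc]
      _ = 0 := h0
  -- each summand is positive semidefinite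
  have hpsd : ∀ k, ((Q k)ᵀ * A k * Q k).PosSemidef := by
    intro k
    have := (hA k).2.conjTranspose_mul_mul_same (Q k)
    rwa [Matrix.conjTranspose_eq_transpose_of_trivial] at this
  -- hence A j * Q j = 0
  have hAQ : A j * Q j = 0 := by
    have hform : ∀ v : Fin p → ℝ, (Q j *ᵥ v) ⬝ᵥ (A j *ᵥ (Q j *ᵥ v)) = 0 := by
      intro v
      have hsum : ∑ k, v ⬝ᵥ (((Q k)ᵀ * A k * Q k) *ᵥ v) = 0 := by
        rw [← dotProduct_sum'', ← sum_mulVec'', key]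
        simp
      have heach : v ⬝ᵥ (((Q j)ᵀ * A j * Q j) *ᵥ v) = 0 := by
        have hnn : ∀ k ∈ Finset.univ, (0:ℝ) ≤ v ⬝ᵥ (((Q k)ᵀ * A k * Q k) *ᵥ v) := by
          intro k _
          have := (hpsd k).dotProduct_mulVec_nonneg v
          simpa using this
        exact (Finset.sum_eq_zero_iff_of_nonneg hnn).mp hsum j (Finset.mem_univ j)
      calc (Q j *ᵥ v) ⬝ᵥ (A j *ᵥ (Q j *ᵥ v))
          = v ⬝ᵥ (((Q j)ᵀ * A j * Q j) *ᵥ v) := by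
            rw [← Matrix.mulVec_mulVec, ← Matrix.mulVec_mulVec,
              Matrix.dotProduct_mulVec v ((Q j)ᵀ), Matrix.vecMul_transpose]
        _ = 0 := heach
    have hvec : ∀ v : Fin p → ℝ, (A j * Q j) *ᵥ v = 0 := by
      intro v
      have h1 : A j *ᵥ (Q j *ᵥ v) = 0 := by
        have := ((hA j).2.dotProduct_mulVec_zero_iff (Q j *ᵥ v)).mp
        apply this
        simpa using hform v
      rw [← Matrix.mulVec_mulVec, h1]
    ext i c
    have := congrFun (hvec (Pi.single c 1)) i
    simpa [Matrix.mulVec_single] using this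
  -- conclude
  by_contra hdet
  have hu : IsUnit (Q j).det := isUnit_iff_ne_zero.mpr hdet
  have : A j = 0 := by
    calc A j = A j * Q j * (Q j)⁻¹ := by
          rw [Matrix.mul_assoc, Matrix.mul_nonsing_inv _ hu, Matrix.mul_one]
      _ = 0 := by rw [hAQ, Matrix.zero_mul]
  exact (hA j).1 this
end
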